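/- arXiv:2303.14671 — 5 statements merged into one kernel-verified Lean document; each statement's English description precedes it below -/
import Mathlib

section
/- Let G be a finite median graph obtained from a graph G1 by a peripheral convex expansion with respect to a convex subgraph G0 of G1. Then C(G,x) = C(G1,x) + (x+1)·C(G0,x). -/
open SimpleGraph Polynomial

/-- The hypercube `Q_n`: vertices are functions `Fin n → Bool`, two vertices adjacent
iff they differ in exactly one coordinate. -/
def hypercube (n : ℕ) : SimpleGraph (Fin n → Bool) where
  Adj x y := ∃! i, x i ≠ y i
  symm := by
    constructor
    rintro x y ⟨i, hi, hu⟩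
    exact ⟨i, hi.symm, fun j hj => hu j hj.symm⟩
  loopless := by
    constructor
    rintro x ⟨i, hi, -⟩
    exact hi rfl

/-- `f` is an isometric embedding of `G` into `H` (distances are preserved); its image is
an isometric subgraph of `H`. -/
def IsIsometricEmbedding {V W : Type*} (G : SimpleGraph V) (H : SimpleGraph W)
    (f : V → W) : Prop :=
  Function.Injective f ∧ ∀ u v : V, H.dist (f u) (f v) = G.dist u v

/-- A partial cube: a connected graph isomorphic to an isometric subgraph of some hypercube. -/
def IsPartialCube {V : Type*} (G : SimpleGraph V) : Prop :=
  G.Connected ∧ ∃ (n : ℕ) (f : V → (Fin n → Bool)), IsIsometricEmbedding G (hypercube n) f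

/-- The Djoković–Winkler relation on (unordered) edges: `e = uv` and `f = xy` are related iff
`d(u,x) + d(v,y) ≠ d(u,y) + d(v,x)`. -/
def DWRel {V : Type*} (G : SimpleGraph V) (e f : Sym2 V) : Prop :=
  ∃ u v x y : V, e = s(u, v) ∧ f = s(x, y) ∧
    G.dist u x + G.dist v y ≠ G.dist u y + G.dist v x

/-- The set of edges of `G` that are Θ-related to `e`. -/
def thetaClassOf {V : Type*} (G : SimpleGraph V) (e : Sym2 V) : Set (Sym2 V) :=
  {f | f ∈ G.edgeSet ∧ DWRel G e f}

/-- `C` is a Θ-class of `G`: the class of some edge of `G` under the Djoković–Winkler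
relation. -/
def IsThetaClass {V : Type*} (G : SimpleGraph V) (C : Set (Sym2 V)) : Prop :=
  ∃ e ∈ G.edgeSet, C = thetaClassOf G e

/-- `W_{uv}`: the set of vertices strictly closer to `u` than to `v`. -/
def sideW {V : Type*} (G : SimpleGraph V) (u v : V) : Set V :=
  {w | G.dist u w < G.dist v w}

/-- Two Θ-classes `C₁ = F_{ab}` and `C₂ = F_{uv}` cross: all four sets
`W_{ab} ∩ W_{uv}`, `W_{ba} ∩ W_{uv}`, `W_{ab} ∩ W_{vu}`, `W_{ba} ∩ W_{vu}` are nonempty. -/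
def Crosses {V : Type*} (G : SimpleGraph V) (C₁ C₂ : Set (Sym2 V)) : Prop :=
  ∃ a b u v : V, G.Adj a b ∧ G.Adj u v ∧
    C₁ = thetaClassOf G s(a, b) ∧ C₂ = thetaClassOf G s(u, v) ∧
    (sideW G a b ∩ sideW G u v).Nonempty ∧ (sideW G b a ∩ sideW G u v).Nonempty ∧
    (sideW G a b ∩ sideW G v u).Nonempty ∧ (sideW G b a ∩ sideW G v u).Nonempty

lemma Crosses.symm {V : Type*} {G : SimpleGraph V} {C₁ C₂ : Set (Sym2 V)}
    (h : Crosses G C₁ C₂) : Crosses G C₂ C₁ := by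
  obtain ⟨a, b, u, v, hab, huv, h1, h2, n1, n2, n3, n4⟩ := h
  refine ⟨u, v, a, b, huv, hab, h2, h1, ?_, ?_, ?_, ?_⟩ <;> rw [Set.inter_comm]
  exacts [n1, n3, n2, n4]

/-- The crossing graph `G^#` of a partial cube `G`: vertices are the Θ-classes of `G`,
two Θ-classes being adjacent iff they cross. -/
def crossingGraph {V : Type*} (G : SimpleGraph V) :
    SimpleGraph {C : Set (Sym2 V) // IsThetaClass G C} where
  Adj C₁ C₂ := C₁ ≠ C₂ ∧ Crosses G C₁.1 C₂.1
  symm := ⟨fun _ _ h => ⟨h.1.symm, h.2.symm⟩⟩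
  loopless := ⟨fun _ h => h.1 rfl⟩

/-- A median graph: a connected graph in which every triple of vertices has a unique median. -/
def IsMedianGraph {V : Type*} (G : SimpleGraph V) : Prop :=
  G.Connected ∧ ∀ u v w : V, ∃! x : V,
    G.dist u x + G.dist x v = G.dist u v ∧
    G.dist u x + G.dist x w = G.dist u w ∧
    G.dist v x + G.dist x w = G.dist v w

/-- `α_i(G)`: the number of induced subgraphs of `G` isomorphic to the `i`-cube. -/
noncomputable def cubeCount {V : Type*} (G : SimpleGraph V) (i : ℕ) : ℕ :=
  Nat.card {s : Set V // Nonempty ((G.induce s) ≃g hypercube i)}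

/-- The cube polynomial `C(G,x) = Σ_i α_i(G) xⁱ`. -/
noncomputable def cubePoly {V : Type*} [Finite V] (G : SimpleGraph V) : Polynomial ℕ :=
  ∑ i ∈ Finset.range (Nat.card V + 1), Polynomial.C (cubeCount G i) * Polynomial.X ^ i

/-- `a_i(G)`: the number of `i`-cliques of `G` (note `a_0 = 1`, the empty clique). -/
noncomputable def cliqueCount {V : Type*} (G : SimpleGraph V) (i : ℕ) : ℕ :=
  Nat.card {s : Finset V // G.IsNClique i s}

/-- The clique polynomial `Cl(G,x) = Σ_i a_i(G) xⁱ`. -/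
noncomputable def cliquePoly {V : Type*} [Finite V] (G : SimpleGraph V) : Polynomial ℕ :=
  ∑ i ∈ Finset.range (Nat.card V + 1), Polynomial.C (cliqueCount G i) * Polynomial.X ^ i

/-- A set `S` of vertices is convex: every shortest path between vertices of `S`
stays inside `S`. -/
def ConvexSet {V : Type*} (G : SimpleGraph V) (S : Set V) : Prop :=
  ∀ u ∈ S, ∀ v ∈ S, ∀ p : G.Walk u v, p.length = G.dist u v → ∀ y ∈ p.support, y ∈ S

/-- The convex hull of a vertex set: the smallest convex set containing it. -/
def gConvexHull {V : Type*} (G : SimpleGraph V) (S : Set V) : Set V :=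
  ⋂₀ {T : Set V | ConvexSet G T ∧ S ⊆ T}

/-- The Θ-class `θ` occurs in (the subgraph of `G` induced by) `S`. -/
def OccursIn {V : Type*} (G : SimpleGraph V) (θ : Set (Sym2 V)) (S : Set V) : Prop :=
  ∃ a b : V, G.Adj a b ∧ a ∈ S ∧ b ∈ S ∧ s(a, b) ∈ θ

/-- A `θ₁,θ₂`-alternating 4-cycle `u v w x u`: edges `uv, xw ∈ θ₁` and `ux, vw ∈ θ₂`. -/
def AltFourCycle {V : Type*} (G : SimpleGraph V) (θ₁ θ₂ : Set (Sym2 V)) (u v w x : V) : Prop :=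
  G.Adj u v ∧ G.Adj v w ∧ G.Adj w x ∧ G.Adj x u ∧ u ≠ w ∧ v ≠ x ∧
  s(u, v) ∈ θ₁ ∧ s(x, w) ∈ θ₁ ∧ s(u, x) ∈ θ₂ ∧ s(v, w) ∈ θ₂

/-- A polynomial with nonnegative coefficients is unimodal. -/
def PolyUnimodal (P : Polynomial ℕ) : Prop :=
  ∃ m : ℕ, (∀ i, i < m → P.coeff i ≤ P.coeff (i + 1)) ∧
    (∀ i, m ≤ i → P.coeff (i + 1) ≤ P.coeff i)

/-- The peripheral expansion of `G₁` with respect to (the vertex set `S` of) a subgraph: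
take the disjoint union of `G₁` and a copy of the subgraph induced on `S`, and join every
vertex of `S` to its copy by an edge. -/
def peripheralExpansion {V₁ : Type*} (G₁ : SimpleGraph V₁) (S : Set V₁) :
    SimpleGraph (V₁ ⊕ ↥S) where
  Adj x y := match x, y with
    | Sum.inl u, Sum.inl v => G₁.Adj u v
    | Sum.inl u, Sum.inr b => u = ↑b
    | Sum.inr a, Sum.inl v => ↑a = v
    | Sum.inr a, Sum.inr b => G₁.Adj ↑a ↑b
  symm := by
    constructor
    rintro (u | a) (v | b) h
    · exact h.symm
    · exact h.symm
    · exact h.symm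
    · exact h.symm
  loopless := by
    constructor
    rintro (u | a) h
    · exact G₁.irrefl h
    · exact G₁.irrefl h

namespace HC
variable {n : ℕ}

def flip (j : Fin n) (x : Fin n → Bool) : Fin n → Bool := Function.update x j (!x j)

@[simp] lemma flip_same (j : Fin n) (x) : flip j x j = !x j := by simp [flip]
@[simp] lemma flip_other {j k : Fin n} (h : k ≠ j) (x) : flip j x k = x k := by
  simp [flip, Function.update_apply, h]

@[simp] lemma flip_flip (j : Fin n) (x) : flip j (flip j x) = x := by
  funext k
  by_cases h : k = j
  · subst h; simp
  · simp [h]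

lemma flip_inj (j : Fin n) : Function.Injective (flip j) := by
  intro x y h
  have := congrArg (flip j) h
  simpa using this

lemma adj_flip (j : Fin n) (x) : (hypercube n).Adj x (flip j x) := by
  refine ⟨j, by simp, ?_⟩
  intro k hk
  by_contra h
  exact hk (by simp [flip_other h])

lemma adj_iff_flip {x y : Fin n → Bool} : (hypercube n).Adj x y ↔ ∃ j, y = flip j x := by
  constructor
  · rintro ⟨j, hj, hu⟩
    refine ⟨j, funext fun k => ?_⟩
    by_cases h : k = j
    · subst h
      cases hxj : x k <;> cases hyj : y k <;> simp_all
    · have := hu k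
      simp [flip_other h]
      by_contra hne
      exact h (hu k (Ne.symm hne))
  · rintro ⟨j, rfl⟩
    exact adj_flip j x

lemma flip_adj_flip {j : Fin n} {x y : Fin n → Bool} :
    (hypercube n).Adj (flip j x) (flip j y) ↔ (hypercube n).Adj x y := by
  have key : ∀ k, flip j x k ≠ flip j y k ↔ x k ≠ y k := by
    intro k
    by_cases h : k = j
    · subst h; simp
    · simp [flip_other h]
  constructor
  · rintro ⟨i, hi, hu⟩
    exact ⟨i, (key i).mp hi, fun k hk => hu k ((key k).mpr hk)⟩
  · rintro ⟨i, hi, hu⟩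
    exact ⟨i, (key i).mpr hi, fun k hk => hu k ((key k).mp hk)⟩

lemma reachable (x y : Fin n → Bool) : (hypercube n).Reachable x y := by
  classical
  generalize hd : (Finset.univ.filter (fun i => x i ≠ y i)).card = d
  induction d generalizing x with
  | zero =>
    have : x = y := by
      funext k
      by_contra h
      have : k ∈ Finset.univ.filter (fun i => x i ≠ y i) := by simp [h]
      rw [Finset.card_eq_zero] at hd
      simp [hd] at this
    exact this ▸ Reachable.refl x
  | succ d ih =>
    have hne : (Finset.univ.filter (fun i => x i ≠ y i)).Nonempty := by
      rw [← Finset.card_pos, hd]; omega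
    obtain ⟨j, hj⟩ := hne
    simp only [Finset.mem_filter] at hj
    have h1 : (hypercube n).Adj x (flip j x) := adj_flip j x
    have h2 : (Finset.univ.filter (fun i => flip j x i ≠ y i)).card = d := by
      have : Finset.univ.filter (fun i => flip j x i ≠ y i)
          = (Finset.univ.filter (fun i => x i ≠ y i)).erase j := by
        ext k
        by_cases h : k = j
        · subst h
          simp only [Finset.mem_filter, Finset.mem_erase]
          constructor
          · intro ⟨_, hk⟩
            exfalso
            apply hk
            cases hxy : x k <;> cases hyy : y k <;> simp_all
          · tauto
        · simp [Finset.mem_filter, Finset.mem_erase, h, flip_other h]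
      rw [this, Finset.card_erase_of_mem (by simp [hj.2]), hd]; omega
    exact (h1.reachable).trans (ih (flip j x) h2)

end HC

namespace HC
variable {n : ℕ}

/-- One-step propagation. -/
lemma step {P : (Fin n → Bool) → Prop}
    (M1 : ∀ x y y', (hypercube n).Adj x y → (hypercube n).Adj x y' → P x → ¬P y → ¬P y' → y = y')
    (M2 : ∀ x x' y, (hypercube n).Adj x y → (hypercube n).Adj x' y → ¬P y → P x → P x' → x = x')
    {j k : Fin n} (hkj : k ≠ j) {z : Fin n → Bool} (h1 : P z) (h2 : ¬P (flip j z)) :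
    P (flip k z) ∧ ¬P (flip j (flip k z)) := by
  have hPk : P (flip k z) := by
    by_contra hw
    have heq := M1 z (flip j z) (flip k z) (adj_flip j z) (adj_flip k z) h1 h2 hw
    have : flip j z j = flip k z j := congrFun heq j
    rw [flip_same, flip_other hkj.symm] at this
    exact absurd this (Bool.not_ne_self _)
  refine ⟨hPk, ?_⟩
  intro hw
  have hcomm : flip j (flip k z) = flip k (flip j z) := by
    funext i
    by_cases hi : i = j <;> by_cases hik : i = k <;>
      simp_all [flip, Function.update_apply]
  have hadj : (hypercube n).Adj (flip j (flip k z)) (flip j z) := by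
    rw [hcomm]
    exact (adj_flip k (flip j z)).symm
  have heq := M2 z (flip j (flip k z)) (flip j z) (adj_flip j z) hadj h2 h1 hw
  have : z k = flip j (flip k z) k := congrFun heq k
  rw [flip_other hkj, flip_same] at this
  exact absurd this.symm (Bool.not_ne_self _)

/-- Propagation across the subcube `z j = x₀ j`. -/
lemma cube_split {P : (Fin n → Bool) → Prop}
    (M1 : ∀ x y y', (hypercube n).Adj x y → (hypercube n).Adj x y' → P x → ¬P y → ¬P y' → y = y')
    (M2 : ∀ x x' y, (hypercube n).Adj x y → (hypercube n).Adj x' y → ¬P y → P x → P x' → x = x')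
    {j : Fin n} {x₀ : Fin n → Bool} (h0 : P x₀) (h1 : ¬P (flip j x₀)) :
    ∀ z, z j = x₀ j → P z ∧ ¬P (flip j z) := by
  classical
  intro z hz
  generalize hd : (Finset.univ.filter (fun i => x₀ i ≠ z i)).card = d
  induction d generalizing z with
  | zero =>
    have : x₀ = z := by
      funext k
      by_contra h
      have : k ∈ Finset.univ.filter (fun i => x₀ i ≠ z i) := by simp [h]
      rw [Finset.card_eq_zero] at hd
      simp [hd] at this
    exact this ▸ ⟨h0, h1⟩
  | succ d ih =>
    have hne : (Finset.univ.filter (fun i => x₀ i ≠ z i)).Nonempty := by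
      rw [← Finset.card_pos, hd]; omega
    obtain ⟨k, hk⟩ := hne
    simp only [Finset.mem_filter] at hk
    have hkj : k ≠ j := fun h => hk.2 (h ▸ hz.symm)
    -- z' = flip k z agrees with x₀ at k and at j
    have hz'j : flip k z j = x₀ j := by rw [flip_other hkj.symm]; exact hz
    have hcard : (Finset.univ.filter (fun i => x₀ i ≠ flip k z i)).card = d := by
      have : Finset.univ.filter (fun i => x₀ i ≠ flip k z i)
          = (Finset.univ.filter (fun i => x₀ i ≠ z i)).erase k := by
        ext i
        by_cases h : i = k
        · subst h
          simp only [Finset.mem_filter, Finset.mem_erase]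
          constructor
          · intro ⟨_, hki⟩
            exfalso
            apply hki
            rw [flip_same]
            cases hx : x₀ i <;> cases hzz : z i <;> simp_all
          · tauto
        · simp [Finset.mem_filter, Finset.mem_erase, h, flip_other h]
      rw [this, Finset.card_erase_of_mem (by simp [hk.2]), hd]
      omega
    obtain ⟨p1, p2⟩ := ih (flip k z) hz'j hcard
    have := step M1 M2 hkj p1 p2
    rwa [flip_flip] at this

/-- Adjacency in the subcube with fixed coordinate j. -/
lemma insertNth_adj {m : ℕ} (j : Fin (m + 1)) (b : Bool) (p q : Fin m → Bool) :
    (hypercube (m + 1)).Adj (j.insertNth b p) (j.insertNth b q) ↔ (hypercube m).Adj p q := by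
  constructor
  · rintro ⟨i, hi, hu⟩
    have hij : i ≠ j := by
      rintro rfl
      rw [Fin.insertNth_apply_same, Fin.insertNth_apply_same] at hi
      exact hi rfl
    obtain ⟨k, rfl⟩ := Fin.exists_succAbove_eq hij
    rw [Fin.insertNth_apply_succAbove, Fin.insertNth_apply_succAbove] at hi
    refine ⟨k, hi, fun l hl => ?_⟩
    have : j.succAbove l = j.succAbove k := by
      apply hu
      rw [Fin.insertNth_apply_succAbove, Fin.insertNth_apply_succAbove]
      exact hl
    exact j.succAbove_right_injective this
  · rintro ⟨k, hk, hu⟩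
    refine ⟨j.succAbove k, ?_, fun l hl => ?_⟩
    · simpa only [Fin.insertNth_apply_succAbove] using hk
    · by_cases h : l = j
      · subst h; rw [Fin.insertNth_apply_same, Fin.insertNth_apply_same] at hl; exact absurd rfl hl
      · obtain ⟨l', rfl⟩ := Fin.exists_succAbove_eq h
        have hl' : p l' ≠ q l' := by
          simpa only [Fin.insertNth_apply_succAbove] using hl
        rw [hu l' hl']

/-- Adjacency across the fixed coordinate. -/
lemma adj_of_ne_at {x y : Fin n → Bool} {j : Fin n} (h : x j ≠ y j) :
    (hypercube n).Adj x y ↔ ∀ k, k ≠ j → x k = y k := by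
  constructor
  · rintro ⟨i, hi, hu⟩ k hk
    have hij : i = j := (hu j h).symm
    subst hij
    by_contra hne
    exact hk (hu k hne)
  · intro hk
    refine ⟨j, h, fun l hl => ?_⟩
    by_contra hlj
    exact hl (hk l hlj)

end HC


section Test
variable {V₁ : Type*} (G₁ : SimpleGraph V₁) (S : Set V₁)


noncomputable def induceIsoOfMap {α β : Type*} {G : SimpleGraph α} {H : SimpleGraph β} {f : α → β}
    (hf : Function.Injective f)
    (hadj : ∀ a b : α, H.Adj (f a) (f b) ↔ G.Adj a b) (t : Set α) :
    G.induce t ≃g H.induce (f '' t) where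
  toEquiv := Equiv.Set.image f t hf
  map_rel_iff' := by
    intro a b
    simp only [Equiv.Set.image_apply, comap_adj, Function.Embedding.coe_subtype, hadj]

lemma nonempty_of_cube {α : Type*} {G : SimpleGraph α} {t : Set α} {i : ℕ}
    (h : Nonempty (G.induce t ≃g hypercube i)) : t.Nonempty := by
  obtain ⟨e⟩ := h
  exact ⟨↑(e.symm (fun _ => false)), (e.symm (fun _ => false)).2⟩
end Test

namespace HC
variable {n : ℕ}

lemma bool_flip_eq : ∀ {b c : Bool}, b ≠ c → (!b) = c := by decide

lemma snoc_adj {m : ℕ} (b : Bool) (p q : Fin m → Bool) :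
    (hypercube (m + 1)).Adj (Fin.snoc p b) (Fin.snoc q b) ↔ (hypercube m).Adj p q := by
  constructor
  · rintro ⟨i, hi, hu⟩
    rcases Fin.eq_castSucc_or_eq_last i with ⟨k, rfl⟩ | rfl
    · simp only [Fin.snoc_castSucc] at hi
      refine ⟨k, hi, fun l hl => ?_⟩
      have : l.castSucc = k.castSucc := by
        apply hu
        simp only [Fin.snoc_castSucc]
        exact hl
      exact Fin.castSucc_injective _ this
    · simp only [Fin.snoc_last] at hi; exact absurd rfl hi
  · rintro ⟨k, hk, hu⟩
    refine ⟨k.castSucc, by simpa only [Fin.snoc_castSucc] using hk, fun l hl => ?_⟩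
    rcases Fin.eq_castSucc_or_eq_last l with ⟨l', rfl⟩ | rfl
    · simp only [Fin.snoc_castSucc] at hl
      rw [hu l' hl]
    · simp only [Fin.snoc_last] at hl; exact absurd rfl hl

lemma snoc_adj_ne {m : ℕ} {b b' : Bool} (h : b ≠ b') (p q : Fin m → Bool) :
    (hypercube (m + 1)).Adj (Fin.snoc p b) (Fin.snoc q b') ↔ p = q := by
  constructor
  · rintro ⟨i, hi, hu⟩
    have hlast : Fin.last m = i := by
      apply hu
      simp only [Fin.snoc_last]
      exact h
    funext k
    by_contra hk
    have : k.castSucc = i := by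
      apply hu
      simp only [Fin.snoc_castSucc]
      exact hk
    rw [← hlast] at this
    exact absurd this (Fin.ne_of_lt (Fin.castSucc_lt_last k))
  · rintro rfl
    refine ⟨Fin.last m, by simpa only [Fin.snoc_last] using h, fun l hl => ?_⟩
    rcases Fin.eq_castSucc_or_eq_last l with ⟨l', rfl⟩ | rfl
    · simp only [Fin.snoc_castSucc] at hl; exact absurd rfl hl
    · rfl

end HC

section Main
variable {V₁ : Type*} {G₁ : SimpleGraph V₁} {S : Set V₁}

open HC Sum

lemma mixed_structure {n : ℕ} {s : Set (V₁ ⊕ ↥S)}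
    (e : (peripheralExpansion G₁ S).induce s ≃g hypercube n)
    (h1 : ∃ u : V₁, Sum.inl u ∈ s) (h2 : ∃ a : ↥S, Sum.inr a ∈ s) :
    ∃ (m : ℕ) (t : Set ↥S), n = m + 1 ∧
      s = Sum.inl '' (Subtype.val '' t) ∪ Sum.inr '' t ∧
      Nonempty ((G₁.induce S).induce t ≃g hypercube m) := by
  classical
  set f : (Fin n → Bool) → (V₁ ⊕ ↥S) := fun x => ↑(e.symm x) with hf
  have finj : Function.Injective f := fun x y h => e.symm.injective (Subtype.ext h)
  have fmem : ∀ x, f x ∈ s := fun x => (e.symm x).2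
  have fadj : ∀ x y, (hypercube n).Adj x y ↔ (peripheralExpansion G₁ S).Adj (f x) (f y) :=
    fun x y => e.symm.map_rel_iff.symm
  have fsurj : ∀ v ∈ s, ∃ x, f x = v := fun v hv =>
    ⟨e ⟨v, hv⟩, by simp only [hf, e.symm_apply_apply]⟩
  set P : (Fin n → Bool) → Prop := fun x => (f x).isLeft = true with hP
  have M1 : ∀ x y y', (hypercube n).Adj x y → (hypercube n).Adj x y' →
      P x → ¬P y → ¬P y' → y = y' := by
    intro x y y' hxy hxy' hx hy hy'
    obtain ⟨u, hu⟩ := Sum.isLeft_iff.mp hx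
    obtain ⟨a, ha⟩ := Sum.isRight_iff.mp (Sum.not_isLeft.mp hy)
    obtain ⟨a', ha'⟩ := Sum.isRight_iff.mp (Sum.not_isLeft.mp hy')
    have e1 : u = ↑a := by
      have := (fadj x y).mp hxy; rw [hu, ha] at this; exact this
    have e2 : u = ↑a' := by
      have := (fadj x y').mp hxy'; rw [hu, ha'] at this; exact this
    apply finj
    rw [ha, ha']
    congr 1
    exact Subtype.ext (e1 ▸ e2)
  have M2 : ∀ x x' y, (hypercube n).Adj x y → (hypercube n).Adj x' y →
      ¬P y → P x → P x' → x = x' := by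
    intro x x' y hxy hxy' hy hx hx'
    obtain ⟨a, ha⟩ := Sum.isRight_iff.mp (Sum.not_isLeft.mp hy)
    obtain ⟨u, hu⟩ := Sum.isLeft_iff.mp hx
    obtain ⟨u', hu'⟩ := Sum.isLeft_iff.mp hx'
    have e1 : u = ↑a := by
      have := (fadj x y).mp hxy; rw [hu, ha] at this; exact this
    have e2 : u' = ↑a := by
      have := (fadj x' y).mp hxy'; rw [hu', ha] at this; exact this
    apply finj
    rw [hu, hu', e1, e2]
  -- find a boundary edge
  obtain ⟨u0, hu0⟩ := h1
  obtain ⟨a0, ha0⟩ := h2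
  obtain ⟨x0, hx0⟩ := fsurj _ hu0
  obtain ⟨y0, hy0⟩ := fsurj _ ha0
  have hPx0 : P x0 := by rw [hP]; simp only [hx0]; rfl
  have hPy0 : ¬P y0 := by rw [hP]; simp only [hy0]; simp
  obtain ⟨d, -, hd1, hd2⟩ :=
    ((HC.reachable x0 y0).some).exists_boundary_dart {x | P x} hPx0 hPy0
  have hadj := d.adj
  obtain ⟨j, hj⟩ := adj_iff_flip.mp hadj
  have hbase : P d.toProd.1 ∧ ¬P (HC.flip j d.toProd.1) := ⟨hd1, hj ▸ hd2⟩
  set a : Fin n → Bool := d.toProd.1 with hadef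
  have H := cube_split M1 M2 hbase.1 hbase.2
  obtain ⟨m, rfl⟩ : ∃ m, n = m + 1 := ⟨n - 1, by have := Fin.pos j; omega⟩
  have Pcoord : ∀ z, P z ↔ z j = a j := by
    intro z
    constructor
    · intro hz
      by_contra hne
      have hzj : HC.flip j z j = a j := by rw [flip_same]; exact bool_flip_eq hne
      have := (H (HC.flip j z) hzj).2
      rw [HC.flip_flip] at this
      exact this hz
    · intro hz; exact (H z hz).1
  have cross : ∀ z, z j = a j → ∃ (u : V₁) (b : ↥S),
      f z = Sum.inl u ∧ f (HC.flip j z) = Sum.inr b ∧ u = ↑b := by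
    intro z hz
    obtain ⟨hz1, hz2⟩ := H z hz
    obtain ⟨u, hu⟩ := Sum.isLeft_iff.mp hz1
    obtain ⟨b, hb⟩ := Sum.isRight_iff.mp (Sum.not_isLeft.mp hz2)
    refine ⟨u, b, hu, hb, ?_⟩
    have := (fadj z (HC.flip j z)).mp (adj_flip j z)
    rw [hu, hb] at this
    exact this
  refine ⟨m, Sum.inr ⁻¹' s, rfl, ?_, ?_⟩
  · ext v
    constructor
    · intro hv
      obtain ⟨x, rfl⟩ := fsurj v hv
      by_cases hPx : P x
      · have hxj := (Pcoord x).mp hPx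
        obtain ⟨u, b, hfu, hfb, rfl⟩ := cross x hxj
        left
        refine ⟨↑b, ⟨b, ?_, rfl⟩, hfu.symm⟩
        show Sum.inr b ∈ s
        rw [← hfb]; exact fmem _
      · right
        obtain ⟨b, hb⟩ := Sum.isRight_iff.mp (Sum.not_isLeft.mp hPx)
        exact ⟨b, by show Sum.inr b ∈ s; rw [← hb]; exact fmem _, hb.symm⟩
    · rintro (⟨w, ⟨b, hb, rfl⟩, rfl⟩ | ⟨b, hb, rfl⟩)
      · -- need inl ↑b ∈ s
        obtain ⟨y, hy⟩ := fsurj _ hb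
        have hPy : ¬P y := by rw [hP]; simp only [hy]; simp
        have hyj : y j ≠ a j := fun h => hPy ((Pcoord y).mpr h)
        have hzj : HC.flip j y j = a j := by rw [flip_same]; exact bool_flip_eq hyj
        obtain ⟨u, b', hfu, hfb, rfl⟩ := cross (HC.flip j y) hzj
        rw [HC.flip_flip, hy] at hfb
        obtain rfl : b' = b := by injection hfb.symm
        rw [← hfu]; exact fmem _
      · exact hb
  · -- build the iso on t := inr ⁻¹' s
    have key : ∀ y : Fin m → Bool,
        (f (HC.flip j (j.insertNth (a j) y))).isRight = true := by
      intro y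
      have hz : (j.insertNth (a j) y : Fin (m+1) → Bool) j = a j := by simp
      exact Sum.not_isLeft.mp (H _ hz).2
    set gfun : (Fin m → Bool) → ↥(Sum.inr ⁻¹' s : Set ↥S) := fun y =>
      ⟨(f (HC.flip j (j.insertNth (a j) y))).getRight (key y), by
        show Sum.inr _ ∈ s
        rw [Sum.inr_getRight]
        exact fmem _⟩ with hg
    have gspec : ∀ y, Sum.inr (↑(gfun y) : ↥S) = f (HC.flip j (j.insertNth (a j) y)) :=
      fun y => Sum.inr_getRight _ _
    have ginj : Function.Injective gfun := by
      intro y y' h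
      have h2 : f (HC.flip j (j.insertNth (a j) y)) = f (HC.flip j (j.insertNth (a j) y')) := by
        rw [← gspec, ← gspec, h]
      have h3 := flip_inj j (finj h2)
      funext k
      have := congrFun h3 (j.succAbove k)
      rwa [Fin.insertNth_apply_succAbove, Fin.insertNth_apply_succAbove] at this
    have gsurj : Function.Surjective gfun := by
      rintro ⟨b, hb⟩
      obtain ⟨y0, hy0⟩ := fsurj _ hb
      have hPy : ¬P y0 := by rw [hP]; simp only [hy0]; simp
      have hyj : y0 j ≠ a j := fun h => hPy ((Pcoord y0).mpr h)
      have hzj : HC.flip j y0 j = a j := by rw [flip_same]; exact bool_flip_eq hyj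
      refine ⟨j.removeNth (HC.flip j y0), ?_⟩
      have hins : j.insertNth (a j) (j.removeNth (HC.flip j y0)) = HC.flip j y0 := by
        rw [← hzj]
        exact Fin.insertNth_self_removeNth j _
      apply Subtype.ext
      have := gspec (j.removeNth (HC.flip j y0))
      rw [hins, HC.flip_flip, hy0] at this
      exact (Sum.inr_injective this).symm ▸ rfl
    have gadj : ∀ y y', ((G₁.induce S).induce (Sum.inr ⁻¹' s : Set ↥S)).Adj (gfun y) (gfun y')
        ↔ (hypercube m).Adj y y' := by
      intro y y'
      have step1 : ((G₁.induce S).induce (Sum.inr ⁻¹' s : Set ↥S)).Adj (gfun y) (gfun y')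
          ↔ (peripheralExpansion G₁ S).Adj (Sum.inr ↑(gfun y)) (Sum.inr ↑(gfun y')) := Iff.rfl
      rw [step1, gspec, gspec, ← fadj, flip_adj_flip, insertNth_adj]
    exact ⟨{ toEquiv := (Equiv.ofBijective gfun ⟨ginj, gsurj⟩).symm,
             map_rel_iff' := by
               intro y y'
               conv_rhs => rw [← (Equiv.ofBijective gfun ⟨ginj, gsurj⟩).apply_symm_apply y,
                 ← (Equiv.ofBijective gfun ⟨ginj, gsurj⟩).apply_symm_apply y']
               exact (gadj _ _).symm }⟩

end Main

section Main2
variable {V₁ : Type*} {G₁ : SimpleGraph V₁} {S : Set V₁}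

lemma union_cube {m : ℕ} (t : Set ↥S)
    (he : Nonempty ((G₁.induce S).induce t ≃g hypercube m)) :
    Nonempty ((peripheralExpansion G₁ S).induce
      (Sum.inl '' (Subtype.val '' t) ∪ Sum.inr '' t) ≃g hypercube (m + 1)) := by
  classical
  obtain ⟨e0⟩ := he
  set e := e0.symm with he0
  set s : Set (V₁ ⊕ ↥S) := Sum.inl '' (Subtype.val '' t) ∪ Sum.inr '' t with hs
  set h : (Fin (m + 1) → Bool) → ↥s := fun y =>
    if hb : y (Fin.last m) = true then
      ⟨Sum.inr ↑(e (Fin.init y)), Or.inr ⟨↑(e (Fin.init y)), (e (Fin.init y)).2, rfl⟩⟩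
    else
      ⟨Sum.inl ↑↑(e (Fin.init y)), Or.inl ⟨↑↑(e (Fin.init y)),
        ⟨↑(e (Fin.init y)), (e (Fin.init y)).2, rfl⟩, rfl⟩⟩ with hh
  have hval : ∀ y, (↑(h y) : V₁ ⊕ ↥S) =
      if y (Fin.last m) = true then Sum.inr ↑(e (Fin.init y))
      else Sum.inl ↑↑(e (Fin.init y)) := by
    intro y
    by_cases hb : y (Fin.last m) = true <;> simp [hh, hb]
  have hinj : Function.Injective h := by
    intro y y' hyy
    have hv := congrArg Subtype.val hyy
    rw [hval, hval] at hv
    cases hb : y (Fin.last m) <;> cases hb' : y' (Fin.last m) <;> rw [hb, hb'] at hv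
    · simp only [Bool.false_eq_true, if_false] at hv
      have hinit : Fin.init y = Fin.init y' :=
        e.injective (Subtype.ext (Subtype.ext (by injection hv)))
      rw [← Fin.snoc_init_self y, ← Fin.snoc_init_self y', hinit, hb, hb']
    · simp at hv
    · simp at hv
    · simp only [if_true] at hv
      have hinit : Fin.init y = Fin.init y' :=
        e.injective (Subtype.ext (by injection hv))
      rw [← Fin.snoc_init_self y, ← Fin.snoc_init_self y', hinit, hb, hb']
  have hsurj : Function.Surjective h := by
    rintro ⟨v, hv⟩
    rcases hv with ⟨w, ⟨b, hbt, rfl⟩, rfl⟩ | ⟨b, hbt, rfl⟩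
    · refine ⟨Fin.snoc (e.symm ⟨b, hbt⟩) false, ?_⟩
      apply Subtype.ext
      rw [hval]
      simp only [Fin.snoc_last, Fin.init_snoc, Bool.false_eq_true, if_false]
      rw [e.apply_symm_apply]
    · refine ⟨Fin.snoc (e.symm ⟨b, hbt⟩) true, ?_⟩
      apply Subtype.ext
      rw [hval]
      simp only [Fin.snoc_last, Fin.init_snoc, if_true]
      rw [e.apply_symm_apply]
  have hadj : ∀ y y', ((peripheralExpansion G₁ S).induce s).Adj (h y) (h y') ↔
      (hypercube (m + 1)).Adj y y' := by
    intro y y'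
    have hstep : ((peripheralExpansion G₁ S).induce s).Adj (h y) (h y') ↔
        (peripheralExpansion G₁ S).Adj ↑(h y) ↑(h y') := Iff.rfl
    rw [hstep, hval, hval]
    conv_rhs => rw [← Fin.snoc_init_self y, ← Fin.snoc_init_self y']
    cases hb : y (Fin.last m) <;> cases hb' : y' (Fin.last m) <;>
      simp only [Bool.false_eq_true, if_false, if_true]
    · rw [HC.snoc_adj]
      exact (e.map_rel_iff :
        ((G₁.induce S).induce t).Adj (e (Fin.init y)) (e (Fin.init y')) ↔ _)
    · rw [HC.snoc_adj_ne (by simp)]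
      constructor
      · intro hvv
        exact e.injective (Subtype.ext (Subtype.ext hvv))
      · rintro hinit
        show (↑↑(e (Fin.init y)) : V₁) = ↑(e (Fin.init y'))
        rw [hinit]
    · rw [HC.snoc_adj_ne (by simp)]
      constructor
      · intro hvv
        exact e.injective (Subtype.ext (Subtype.ext
          (show (↑↑(e (Fin.init y)) : V₁) = ↑↑(e (Fin.init y')) from hvv)))
      · rintro hinit
        show (↑↑(e (Fin.init y)) : V₁) = ↑↑(e (Fin.init y'))
        rw [hinit]
    · rw [HC.snoc_adj]
      exact (e.map_rel_iff :
        ((G₁.induce S).induce t).Adj (e (Fin.init y)) (e (Fin.init y')) ↔ _)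
  exact ⟨(⟨Equiv.ofBijective h ⟨hinj, hsurj⟩, fun {y y'} => hadj y y'⟩ :
    hypercube (m + 1) ≃g (peripheralExpansion G₁ S).induce s).symm⟩

end Main2

section Count
variable {V₁ : Type*} {G₁ : SimpleGraph V₁} {S : Set V₁}

lemma inr_preimage_union (A : Set V₁) (t : Set ↥S) :
    Sum.inr ⁻¹' (Sum.inl '' A ∪ Sum.inr '' t) = t := by ext b; simp

lemma cube_inl {i : ℕ} (t : Set V₁) :
    Nonempty (G₁.induce t ≃g hypercube i) ↔
      Nonempty ((peripheralExpansion G₁ S).induce (Sum.inl '' t) ≃g hypercube i) := by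
  have iso0 : G₁.induce t ≃g (peripheralExpansion G₁ S).induce (Sum.inl '' t) :=
    induceIsoOfMap Sum.inl_injective (fun _ _ => Iff.rfl) t
  exact ⟨fun ⟨e⟩ => ⟨iso0.symm.trans e⟩, fun ⟨e⟩ => ⟨iso0.trans e⟩⟩

lemma cube_inr {i : ℕ} (t : Set ↥S) :
    Nonempty ((G₁.induce S).induce t ≃g hypercube i) ↔
      Nonempty ((peripheralExpansion G₁ S).induce (Sum.inr '' t) ≃g hypercube i) := by
  have iso0 : (G₁.induce S).induce t ≃g (peripheralExpansion G₁ S).induce (Sum.inr '' t) :=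
    induceIsoOfMap Sum.inr_injective (fun _ _ => Iff.rfl) t
  exact ⟨fun ⟨e⟩ => ⟨iso0.symm.trans e⟩, fun ⟨e⟩ => ⟨iso0.trans e⟩⟩

variable [Finite V₁]

lemma cubeCount_pe_succ (m : ℕ) :
    cubeCount (peripheralExpansion G₁ S) (m + 1) =
      cubeCount G₁ (m + 1) + cubeCount (G₁.induce S) (m + 1) + cubeCount (G₁.induce S) m := by
  classical
  set F : ({s : Set V₁ // Nonempty (G₁.induce s ≃g hypercube (m + 1))} ⊕
      {t : Set ↥S // Nonempty ((G₁.induce S).induce t ≃g hypercube (m + 1))} ⊕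
      {t : Set ↥S // Nonempty ((G₁.induce S).induce t ≃g hypercube m)}) →
      {s : Set (V₁ ⊕ ↥S) //
        Nonempty ((peripheralExpansion G₁ S).induce s ≃g hypercube (m + 1))} :=
    Sum.elim (fun p => ⟨Sum.inl '' p.1, (cube_inl p.1).mp p.2⟩)
      (Sum.elim (fun p => ⟨Sum.inr '' p.1, (cube_inr p.1).mp p.2⟩)
        (fun p => ⟨Sum.inl '' (Subtype.val '' p.1) ∪ Sum.inr '' p.1, union_cube p.1 p.2⟩))
    with hF
  have hFinj : Function.Injective F := by
    rintro (⟨t1, h1⟩ | ⟨t2, h2⟩ | ⟨t3, h3⟩) (⟨t1', h1'⟩ | ⟨t2', h2'⟩ | ⟨t3', h3'⟩) h <;>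
      simp only [hF, Sum.elim_inl, Sum.elim_inr, Subtype.mk.injEq] at h
    · obtain rfl : t1 = t1' := by
        rw [← Set.preimage_image_eq t1 Sum.inl_injective, h,
          Set.preimage_image_eq t1' Sum.inl_injective]
      rfl
    · exfalso
      obtain ⟨x, hx⟩ := nonempty_of_cube h1
      have : Sum.inl x ∈ Sum.inr '' t2' := h ▸ ⟨x, hx, rfl⟩
      obtain ⟨b, -, hb⟩ := this
      exact Sum.inr_ne_inl hb
    · exfalso
      obtain ⟨b, hb⟩ := nonempty_of_cube h3'
      have : Sum.inr b ∈ Sum.inl '' t1 := by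
        rw [h]; exact Or.inr ⟨b, hb, rfl⟩
      obtain ⟨u, -, hu⟩ := this
      exact Sum.inl_ne_inr hu
    · exfalso
      obtain ⟨x, hx⟩ := nonempty_of_cube h1'
      have : Sum.inl x ∈ Sum.inr '' t2 := h.symm ▸ ⟨x, hx, rfl⟩
      obtain ⟨b, -, hb⟩ := this
      exact Sum.inr_ne_inl hb
    · obtain rfl : t2 = t2' := by
        rw [← Set.preimage_image_eq t2 Sum.inr_injective, h,
          Set.preimage_image_eq t2' Sum.inr_injective]
      rfl
    · exfalso
      obtain ⟨b, hb⟩ := nonempty_of_cube h3'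
      have : (Sum.inl ↑b : V₁ ⊕ ↥S) ∈ Sum.inr '' t2 := by
        rw [h]; exact Or.inl ⟨↑b, ⟨b, hb, rfl⟩, rfl⟩
      obtain ⟨b', -, hb'⟩ := this
      exact Sum.inr_ne_inl hb'
    · exfalso
      obtain ⟨b, hb⟩ := nonempty_of_cube h3
      have : Sum.inr b ∈ Sum.inl '' t1' := by
        rw [← h]; exact Or.inr ⟨b, hb, rfl⟩
      obtain ⟨u, -, hu⟩ := this
      exact Sum.inl_ne_inr hu
    · exfalso
      obtain ⟨b, hb⟩ := nonempty_of_cube h3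
      have : (Sum.inl ↑b : V₁ ⊕ ↥S) ∈ Sum.inr '' t2' := by
        rw [← h]; exact Or.inl ⟨↑b, ⟨b, hb, rfl⟩, rfl⟩
      obtain ⟨b', -, hb'⟩ := this
      exact Sum.inr_ne_inl hb'
    · obtain rfl : t3 = t3' := by
        rw [← inr_preimage_union (Subtype.val '' t3) t3, h,
          inr_preimage_union (Subtype.val '' t3') t3']
      rfl
  have hFsurj : Function.Surjective F := by
    rintro ⟨s, hs⟩
    by_cases h1 : ∃ u : V₁, Sum.inl u ∈ s
    · by_cases h2 : ∃ a : ↥S, Sum.inr a ∈ s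
      · obtain ⟨e⟩ := hs
        obtain ⟨m', t, heq, hset, hiso⟩ := mixed_structure e h1 h2
        obtain rfl : m' = m := by omega
        exact ⟨Sum.inr (Sum.inr ⟨t, hiso⟩), Subtype.ext hset.symm⟩
      · have hsub : s ⊆ Set.range Sum.inl := by
          rintro (u | a) hv
          · exact Set.mem_range_self u
          · exact absurd ⟨a, hv⟩ h2
        have himg : Sum.inl '' (Sum.inl ⁻¹' s) = s :=
          Set.image_preimage_eq_of_subset hsub
        rw [← himg] at hs
        exact ⟨Sum.inl ⟨Sum.inl ⁻¹' s, (cube_inl _).mpr hs⟩, Subtype.ext himg⟩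
    · by_cases h2 : ∃ a : ↥S, Sum.inr a ∈ s
      · have hsub : s ⊆ Set.range Sum.inr := by
          rintro (u | a) hv
          · exact absurd ⟨u, hv⟩ h1
          · exact Set.mem_range_self a
        have himg : Sum.inr '' (Sum.inr ⁻¹' s) = s :=
          Set.image_preimage_eq_of_subset hsub
        rw [← himg] at hs
        exact ⟨Sum.inr (Sum.inl ⟨Sum.inr ⁻¹' s, (cube_inr _).mpr hs⟩), Subtype.ext himg⟩
      · exfalso
        obtain ⟨e⟩ := hs
        have hv := (e.symm (fun _ => false)).2
        cases hx : (↑(e.symm (fun _ => false)) : V₁ ⊕ ↥S) with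
        | inl u => exact h1 ⟨u, hx ▸ hv⟩
        | inr a => exact h2 ⟨a, hx ▸ hv⟩
  have := Nat.card_congr (Equiv.ofBijective F ⟨hFinj, hFsurj⟩)
  rw [Nat.card_sum, Nat.card_sum] at this
  rw [cubeCount, ← this, cubeCount, cubeCount, cubeCount]
  omega

lemma cubeCount_pe_zero :
    cubeCount (peripheralExpansion G₁ S) 0 =
      cubeCount G₁ 0 + cubeCount (G₁.induce S) 0 := by
  classical
  set F : ({s : Set V₁ // Nonempty (G₁.induce s ≃g hypercube 0)} ⊕
      {t : Set ↥S // Nonempty ((G₁.induce S).induce t ≃g hypercube 0)}) →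
      {s : Set (V₁ ⊕ ↥S) //
        Nonempty ((peripheralExpansion G₁ S).induce s ≃g hypercube 0)} :=
    Sum.elim (fun p => ⟨Sum.inl '' p.1, (cube_inl p.1).mp p.2⟩)
      (fun p => ⟨Sum.inr '' p.1, (cube_inr p.1).mp p.2⟩) with hF
  have hFinj : Function.Injective F := by
    rintro (⟨t1, h1⟩ | ⟨t2, h2⟩) (⟨t1', h1'⟩ | ⟨t2', h2'⟩) h <;>
      simp only [hF, Sum.elim_inl, Sum.elim_inr, Subtype.mk.injEq] at h
    · obtain rfl : t1 = t1' := by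
        rw [← Set.preimage_image_eq t1 Sum.inl_injective, h,
          Set.preimage_image_eq t1' Sum.inl_injective]
      rfl
    · exfalso
      obtain ⟨x, hx⟩ := nonempty_of_cube h1
      have : Sum.inl x ∈ Sum.inr '' t2' := h ▸ ⟨x, hx, rfl⟩
      obtain ⟨b, -, hb⟩ := this
      exact Sum.inr_ne_inl hb
    · exfalso
      obtain ⟨x, hx⟩ := nonempty_of_cube h1'
      have : Sum.inl x ∈ Sum.inr '' t2 := h.symm ▸ ⟨x, hx, rfl⟩
      obtain ⟨b, -, hb⟩ := this
      exact Sum.inr_ne_inl hb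
    · obtain rfl : t2 = t2' := by
        rw [← Set.preimage_image_eq t2 Sum.inr_injective, h,
          Set.preimage_image_eq t2' Sum.inr_injective]
      rfl
  have hFsurj : Function.Surjective F := by
    rintro ⟨s, hs⟩
    by_cases h1 : ∃ u : V₁, Sum.inl u ∈ s
    · by_cases h2 : ∃ a : ↥S, Sum.inr a ∈ s
      · obtain ⟨e⟩ := hs
        obtain ⟨m', t, heq, -, -⟩ := mixed_structure e h1 h2
        omega
      · have hsub : s ⊆ Set.range Sum.inl := by
          rintro (u | a) hv
          · exact Set.mem_range_self u
          · exact absurd ⟨a, hv⟩ h2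
        have himg : Sum.inl '' (Sum.inl ⁻¹' s) = s :=
          Set.image_preimage_eq_of_subset hsub
        rw [← himg] at hs
        exact ⟨Sum.inl ⟨Sum.inl ⁻¹' s, (cube_inl _).mpr hs⟩, Subtype.ext himg⟩
    · by_cases h2 : ∃ a : ↥S, Sum.inr a ∈ s
      · have hsub : s ⊆ Set.range Sum.inr := by
          rintro (u | a) hv
          · exact absurd ⟨u, hv⟩ h1
          · exact Set.mem_range_self a
        have himg : Sum.inr '' (Sum.inr ⁻¹' s) = s :=
          Set.image_preimage_eq_of_subset hsub
        rw [← himg] at hs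
        exact ⟨Sum.inr ⟨Sum.inr ⁻¹' s, (cube_inr _).mpr hs⟩, Subtype.ext himg⟩
      · exfalso
        obtain ⟨e⟩ := hs
        have hv := (e.symm (fun _ => false)).2
        cases hx : (↑(e.symm (fun _ => false)) : V₁ ⊕ ↥S) with
        | inl u => exact h1 ⟨u, hx ▸ hv⟩
        | inr a => exact h2 ⟨a, hx ▸ hv⟩
  have := Nat.card_congr (Equiv.ofBijective F ⟨hFinj, hFsurj⟩)
  rw [Nat.card_sum] at this
  rw [cubeCount, ← this, cubeCount, cubeCount]

end Count

open Polynomial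

lemma cubeCount_eq_zero' {V : Type*} [Finite V] (G : SimpleGraph V) {i : ℕ}
    (h : Nat.card V < 2 ^ i) : cubeCount G i = 0 := by
  rw [cubeCount, Nat.card_eq_zero]
  left
  constructor
  rintro ⟨s, ⟨e⟩⟩
  have hinj : Function.Injective (fun x : Fin i → Bool => (↑(e.symm x) : V)) :=
    fun x y hxy => e.symm.injective (Subtype.ext hxy)
  have hle := Nat.card_le_card_of_injective _ hinj
  have hcard : Nat.card (Fin i → Bool) = 2 ^ i := by
    rw [Nat.card_eq_fintype_card, Fintype.card_fun]
    simp
  omega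

lemma cubePoly_eq_sum {V : Type*} [Finite V] (G : SimpleGraph V) {N : ℕ}
    (h : Nat.card V + 1 ≤ N) :
    cubePoly G = ∑ i ∈ Finset.range N, Polynomial.C (cubeCount G i) * Polynomial.X ^ i := by
  rw [cubePoly]
  apply Finset.sum_subset (Finset.range_subset_range.mpr h)
  intro i hi hni
  have hlt : Nat.card V < 2 ^ i := by
    have h2 : i < 2 ^ i := Nat.lt_two_pow_self
    simp only [Finset.mem_range] at hi hni
    omega
  rw [cubeCount_eq_zero' G hlt, map_zero, zero_mul]

theorem cubePoly_peripheralExpansion' {V₁ : Type*} [Finite V₁] (G₁ : SimpleGraph V₁)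
    (S : Set V₁) :
    cubePoly (peripheralExpansion G₁ S) =
      cubePoly G₁ + (Polynomial.X + 1) * cubePoly (G₁.induce S) := by
  classical
  set M := Nat.card (V₁ ⊕ ↥S) + Nat.card V₁ + Nat.card ↥S + 1 with hM
  have hpe : Nat.card (V₁ ⊕ ↥S) + 1 ≤ M + 1 := by omega
  have hg1 : Nat.card V₁ + 1 ≤ M + 1 := by omega
  have hg0 : Nat.card ↥S + 1 ≤ M + 1 := by omega
  have hg0' : Nat.card ↥S + 1 ≤ M := by omega
  rw [cubePoly_eq_sum (peripheralExpansion G₁ S) hpe, cubePoly_eq_sum G₁ hg1,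
    cubePoly_eq_sum (G₁.induce S) hg0]
  have key : ∀ i : ℕ, cubeCount (peripheralExpansion G₁ S) i =
      cubeCount G₁ i + cubeCount (G₁.induce S) i +
        (match i with | 0 => 0 | (m + 1) => cubeCount (G₁.induce S) m) := by
    intro i
    match i with
    | 0 => rw [cubeCount_pe_zero]; rfl
    | (m + 1) => rw [cubeCount_pe_succ]
  have expand : ∀ i : ℕ,
      (Polynomial.C (cubeCount (peripheralExpansion G₁ S) i) * Polynomial.X ^ i
        : Polynomial ℕ) =
      Polynomial.C (cubeCount G₁ i) * Polynomial.X ^ i +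
      Polynomial.C (cubeCount (G₁.induce S) i) * Polynomial.X ^ i +
      Polynomial.C (match i with | 0 => 0 | (m + 1) => cubeCount (G₁.induce S) m)
        * Polynomial.X ^ i := by
    intro i
    rw [key i, map_add, map_add]
    ring
  rw [Finset.sum_congr rfl (fun i _ => expand i), Finset.sum_add_distrib,
    Finset.sum_add_distrib]
  have third : (∑ i ∈ Finset.range (M + 1),
      Polynomial.C (match i with | 0 => 0 | (m + 1) => cubeCount (G₁.induce S) m)
        * Polynomial.X ^ i : Polynomial ℕ) =
      Polynomial.X * ∑ i ∈ Finset.range (M + 1),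
        Polynomial.C (cubeCount (G₁.induce S) i) * Polynomial.X ^ i := by
    rw [Finset.sum_range_succ' _ M]
    have hzero : (Polynomial.C (match 0 with | 0 => (0:ℕ) | (m+1) => cubeCount (G₁.induce S) m)
        * Polynomial.X ^ 0 : Polynomial ℕ) = 0 := by simp
    rw [hzero, add_zero]
    have hM0 : (∑ i ∈ Finset.range M,
        Polynomial.C (cubeCount (G₁.induce S) i) * Polynomial.X ^ (i + 1) : Polynomial ℕ) =
        Polynomial.X * ∑ i ∈ Finset.range M,
          Polynomial.C (cubeCount (G₁.induce S) i) * Polynomial.X ^ i := by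
      rw [Finset.mul_sum]
      apply Finset.sum_congr rfl
      intro i _
      ring
    rw [hM0]
    congr 1
    rw [← cubePoly_eq_sum (G₁.induce S) hg0', cubePoly_eq_sum (G₁.induce S) hg0]
  rw [third]
  ring




/-- If a finite median graph `G` is obtained from `G₁` by a peripheral
convex expansion with respect to a convex subgraph `G₀ = G₁[S]`, then
`C(G,x) = C(G₁,x) + (x+1)·C(G₀,x)`. -/
theorem cubePoly_peripheralExpansion {V₁ : Type*} [Finite V₁] (G₁ : SimpleGraph V₁)
    (S : Set V₁) (hconv : ConvexSet G₁ S)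
    (hmed : IsMedianGraph (peripheralExpansion G₁ S)) :
    cubePoly (peripheralExpansion G₁ S) =
      cubePoly G₁ + (Polynomial.X + 1) * cubePoly (G₁.induce S) :=
  cubePoly_peripheralExpansion' G₁ S
end

section
/- For any finite graph G, the simplex graph S(G) is a median graph and G is isomorphic to the crossing graph S(G)^#. In particular, every finite graph can be represented as the crossing graph of some median graph. -/
open SimpleGraph Polynomial

/-- The simplex graph `S(G)`: vertices are the cliques of `G` (including the empty clique),
two cliques being adjacent iff they differ in exactly one vertex. -/
def simplexGraph {V : Type*} [DecidableEq V] (G : SimpleGraph V) :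
    SimpleGraph {s : Finset V // G.IsClique (s : Set V)} where
  Adj s t := (symmDiff s.1 t.1).card = 1
  symm := by
    constructor
    intro s t h
    rwa [symmDiff_comm]
  loopless := by
    constructor
    intro s h
    simp [symmDiff_self] at h

set_option linter.unusedTactic false
set_option linter.unreachableTactic false

namespace SXAux

variable {V : Type*} [DecidableEq V] {G : SimpleGraph V}

/-- abbreviation for clique subtype -/
abbrev Cl (G : SimpleGraph V) := {s : Finset V // G.IsClique (s : Set V)}

lemma card_sd_singleton (A : Finset V) (v : V) :
    (symmDiff A {v}).card = if v ∈ A then A.card - 1 else A.card + 1 := by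
  by_cases h : v ∈ A
  · have : symmDiff A {v} = A.erase v := by
      ext a; simp [Finset.mem_symmDiff]; by_cases hav : a = v <;> simp [hav, h]
    simp [this, Finset.card_erase_of_mem h, h]
  · have : symmDiff A {v} = insert v A := by
      ext a; simp [Finset.mem_symmDiff]; by_cases hav : a = v <;> simp [hav, h]
    simp [this, Finset.card_insert_of_notMem h, h]

lemma simplex_adj_iff (s t : Cl G) :
    (simplexGraph G).Adj s t ↔ ∃ v, symmDiff s.1 t.1 = {v} := by
  simp [simplexGraph, Finset.card_eq_one]

lemma sd_triangle (A B C : Finset V) :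
    (symmDiff A C).card ≤ (symmDiff A B).card + (symmDiff B C).card := by
  calc (symmDiff A C).card ≤ (symmDiff A B ∪ symmDiff B C).card :=
        Finset.card_le_card (symmDiff_triangle A B C)
    _ ≤ _ := Finset.card_union_le _ _

lemma walk_card {s t : Cl G} (p : (simplexGraph G).Walk s t) :
    (symmDiff s.1 t.1).card ≤ p.length := by
  induction p with
  | nil => simp
  | cons h q ih =>
    rename_i u v w
    calc (symmDiff u.1 w.1).card ≤ (symmDiff u.1 v.1).card + (symmDiff v.1 w.1).card :=
          sd_triangle _ _ _
      _ ≤ 1 + q.length := by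
          have : (symmDiff u.1 v.1).card = 1 := h
          omega
      _ = (SimpleGraph.Walk.cons h q).length := by simp [Nat.add_comm]

lemma exists_walk_aux :
    ∀ n (s t : Cl G), (symmDiff s.1 t.1).card ≤ n →
      ∃ p : (simplexGraph G).Walk s t, p.length = (symmDiff s.1 t.1).card := by
  intro n
  induction n with
  | zero =>
    intro s t h
    have : symmDiff s.1 t.1 = ∅ := Finset.card_eq_zero.mp (Nat.le_zero.mp h)
    have hst : s = t := Subtype.ext (by
      have := symmDiff_eq_bot.mp this; exact this)
    subst hst
    exact ⟨SimpleGraph.Walk.nil, by simp⟩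
  | succ n ih =>
    intro s t h
    by_cases h0 : symmDiff s.1 t.1 = ∅
    · have hst : s = t := Subtype.ext (symmDiff_eq_bot.mp h0)
      subst hst
      exact ⟨SimpleGraph.Walk.nil, by simp [h0]⟩
    · by_cases hsd : (s.1 \ t.1).Nonempty
      · obtain ⟨v, hv⟩ := hsd
        have hvs : v ∈ s.1 := (Finset.mem_sdiff.mp hv).1
        have hvt : v ∉ t.1 := (Finset.mem_sdiff.mp hv).2
        refine ?_
        set s' : Cl G := ⟨s.1.erase v, s.2.subset (by
          intro x hx
          simp only [Finset.coe_erase, Set.mem_diff] at hx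
          exact hx.1)⟩ with hs'
        have hadj : (simplexGraph G).Adj s s' := by
          rw [simplex_adj_iff]
          exact ⟨v, by ext a; simp [Finset.mem_symmDiff, hs']; by_cases hav : a = v <;>
            simp [hav, hvs] <;> tauto⟩
        have hsd' : symmDiff s'.1 t.1 = (symmDiff s.1 t.1).erase v := by
          ext a; simp [Finset.mem_symmDiff, hs']
          by_cases hav : a = v <;> simp [hav, hvs, hvt] <;> tauto
        have hvmem : v ∈ symmDiff s.1 t.1 := by simp [Finset.mem_symmDiff, hvs, hvt]
        have hcard : (symmDiff s'.1 t.1).card = (symmDiff s.1 t.1).card - 1 := by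
          rw [hsd', Finset.card_erase_of_mem hvmem]
        have hle : (symmDiff s'.1 t.1).card ≤ n := by
          have : 1 ≤ (symmDiff s.1 t.1).card := Finset.card_pos.mpr ⟨v, hvmem⟩
          omega
        obtain ⟨p, hp⟩ := ih s' t hle
        refine ⟨SimpleGraph.Walk.cons hadj p, ?_⟩
        have : 1 ≤ (symmDiff s.1 t.1).card := Finset.card_pos.mpr ⟨v, hvmem⟩
        simp [hp, hcard]
        omega
      · have hsub : s.1 ⊆ t.1 := by
          rw [← Finset.sdiff_eq_empty_iff_subset]
          exact Finset.not_nonempty_iff_eq_empty.mp hsd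
        obtain ⟨v, hvmem⟩ := Finset.nonempty_iff_ne_empty.mpr h0
        have hvt : v ∈ t.1 := by
          rcases Finset.mem_symmDiff.mp hvmem with ⟨h1, h2⟩ | ⟨h1, h2⟩
          · exact absurd (hsub h1) h2
          · exact h1
        have hvs : v ∉ s.1 := by
          rcases Finset.mem_symmDiff.mp hvmem with ⟨h1, h2⟩ | ⟨h1, h2⟩
          · exact absurd (hsub h1) h2
          · exact h2
        set s' : Cl G := ⟨insert v s.1, t.2.subset (by
          intro x hx
          simp only [Finset.coe_insert, Set.mem_insert_iff] at hx
          rcases hx with rfl | hx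
          · exact hvt
          · exact hsub hx)⟩ with hs'
        have hadj : (simplexGraph G).Adj s s' := by
          rw [simplex_adj_iff]
          exact ⟨v, by ext a; simp [Finset.mem_symmDiff, hs']; by_cases hav : a = v <;>
            simp [hav, hvs] <;> tauto⟩
        have hsd' : symmDiff s'.1 t.1 = (symmDiff s.1 t.1).erase v := by
          ext a; simp [Finset.mem_symmDiff, hs']
          by_cases hav : a = v <;> simp [hav, hvs, hvt] <;> tauto
        have hcard : (symmDiff s'.1 t.1).card = (symmDiff s.1 t.1).card - 1 := by
          rw [hsd', Finset.card_erase_of_mem hvmem]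
        have hle : (symmDiff s'.1 t.1).card ≤ n := by
          have : 1 ≤ (symmDiff s.1 t.1).card := Finset.card_pos.mpr ⟨v, hvmem⟩
          omega
        obtain ⟨p, hp⟩ := ih s' t hle
        refine ⟨SimpleGraph.Walk.cons hadj p, ?_⟩
        have : 1 ≤ (symmDiff s.1 t.1).card := Finset.card_pos.mpr ⟨v, hvmem⟩
        simp [hp, hcard]
        omega

lemma exists_walk (s t : Cl G) :
    ∃ p : (simplexGraph G).Walk s t, p.length = (symmDiff s.1 t.1).card :=
  exists_walk_aux _ s t le_rfl

lemma simplex_preconnected : (simplexGraph G).Preconnected := by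
  intro s t
  obtain ⟨p, _⟩ := exists_walk s t
  exact ⟨p⟩

lemma simplex_dist_eq (s t : Cl G) :
    (simplexGraph G).dist s t = (symmDiff s.1 t.1).card := by
  obtain ⟨p, hp⟩ := exists_walk s t
  refine le_antisymm (hp ▸ SimpleGraph.dist_le p) ?_
  obtain ⟨q, hq⟩ := (simplex_preconnected s t).exists_walk_length_eq_dist
  exact hq ▸ walk_card q




lemma card_add_card (C D : Finset V) :
    C.card + D.card = (symmDiff C D).card + 2 * (C ∩ D).card := by
  have h1 : (C ∪ D).card + (C ∩ D).card = C.card + D.card :=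
    Finset.card_union_add_card_inter C D
  have h2 : symmDiff C D = (C ∪ D) \ (C ∩ D) := by
    ext a; simp [Finset.mem_symmDiff]; tauto
  have h3 : ((C ∪ D) \ (C ∩ D)).card + (C ∩ D).card = (C ∪ D).card :=
    Finset.card_sdiff_add_card_eq_card (by
      intro a ha; exact Finset.mem_union_left _ (Finset.mem_inter.mp ha).1)
  rw [h2]
  omega

lemma between_iff (A X B : Finset V) :
    (symmDiff A X).card + (symmDiff X B).card = (symmDiff A B).card ↔
      A ∩ B ⊆ X ∧ X ⊆ A ∪ B := by
  have hsd : symmDiff (symmDiff A X) (symmDiff X B) = symmDiff A B := by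
    ext a; simp [Finset.mem_symmDiff]; tauto
  have hkey := card_add_card (symmDiff A X) (symmDiff X B)
  rw [hsd] at hkey
  constructor
  · intro h
    have hI : (symmDiff A X ∩ symmDiff X B).card = 0 := by omega
    have hIe : symmDiff A X ∩ symmDiff X B = ∅ := Finset.card_eq_zero.mp hI
    constructor
    · intro v hv
      by_contra hvx
      have h1 : v ∈ symmDiff A X := by
        simp [Finset.mem_symmDiff, (Finset.mem_inter.mp hv).1, hvx]
      have h2 : v ∈ symmDiff X B := by
        simp [Finset.mem_symmDiff, (Finset.mem_inter.mp hv).2, hvx]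
      exact absurd (Finset.mem_inter.mpr ⟨h1, h2⟩) (by simp [hIe])
    · intro v hv
      by_contra hvu
      simp only [Finset.mem_union] at hvu
      push_neg at hvu
      have h1 : v ∈ symmDiff A X := by simp [Finset.mem_symmDiff, hv, hvu.1]
      have h2 : v ∈ symmDiff X B := by simp [Finset.mem_symmDiff, hv, hvu.2]
      exact absurd (Finset.mem_inter.mpr ⟨h1, h2⟩) (by simp [hIe])
  · intro ⟨h1, h2⟩
    have hIe : symmDiff A X ∩ symmDiff X B = ∅ := by
      rw [Finset.eq_empty_iff_forall_notMem]
      intro v hv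
      obtain ⟨hvA, hvB⟩ := Finset.mem_inter.mp hv
      rcases Finset.mem_symmDiff.mp hvA with ⟨ha, hx⟩ | ⟨hx, ha⟩
      · rcases Finset.mem_symmDiff.mp hvB with ⟨hx', _⟩ | ⟨hb, hx'⟩
        · exact hx hx'
        · exact hx (h1 (Finset.mem_inter.mpr ⟨ha, hb⟩))
      · rcases Finset.mem_symmDiff.mp hvB with ⟨_, hb⟩ | ⟨_, hx'⟩
        · rcases Finset.mem_union.mp (h2 hx) with h | h
          · exact ha h
          · exact hb h
        · exact hx' hx
    have : (symmDiff A X ∩ symmDiff X B).card = 0 := by simp [hIe]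
    omega

/-- the majority clique -/
def median (a b c : Cl G) : Cl G :=
  ⟨(a.1 ∩ b.1) ∪ (a.1 ∩ c.1) ∪ (b.1 ∩ c.1), by
    intro x hx y hy hxy
    simp only [Finset.coe_union, Finset.coe_inter, Set.mem_union, Set.mem_inter_iff,
      Finset.mem_coe] at hx hy
    have key : (x ∈ a.1 ∧ y ∈ a.1) ∨ (x ∈ b.1 ∧ y ∈ b.1) ∨ (x ∈ c.1 ∧ y ∈ c.1) := by
      tauto
    rcases key with ⟨h1, h2⟩ | ⟨h1, h2⟩ | ⟨h1, h2⟩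
    · exact a.2 h1 h2 hxy
    · exact b.2 h1 h2 hxy
    · exact c.2 h1 h2 hxy⟩


lemma simplex_isMedian :
    (simplexGraph G).Connected ∧ ∀ u v w : Cl G, ∃! x : Cl G,
      (simplexGraph G).dist u x + (simplexGraph G).dist x v = (simplexGraph G).dist u v ∧
      (simplexGraph G).dist u x + (simplexGraph G).dist x w = (simplexGraph G).dist u w ∧
      (simplexGraph G).dist v x + (simplexGraph G).dist x w = (simplexGraph G).dist v w := by
  constructor
  · have : Nonempty (Cl G) := ⟨⟨∅, by simp⟩⟩
    exact ⟨simplex_preconnected⟩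
  · intro a b c
    refine ⟨median a b c, ?_, ?_⟩
    · simp only [simplex_dist_eq, between_iff]
      refine ⟨⟨?_, ?_⟩, ⟨?_, ?_⟩, ⟨?_, ?_⟩⟩ <;>
        · intro v hv
          simp only [median, Finset.mem_union, Finset.mem_inter] at hv ⊢
          tauto
    · intro x hx
      simp only [simplex_dist_eq, between_iff] at hx
      obtain ⟨⟨hab1, hab2⟩, ⟨hac1, hac2⟩, ⟨hbc1, hbc2⟩⟩ := hx
      refine Subtype.ext (Finset.Subset.antisymm ?_ ?_)
      · intro v hv
        have h1 := hab2 hv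
        have h2 := hac2 hv
        have h3 := hbc2 hv
        simp only [median, Finset.mem_union, Finset.mem_inter] at *
        tauto
      · intro v hv
        simp only [median, Finset.mem_union, Finset.mem_inter] at hv
        rcases hv with (h | h) | h
        · exact hab1 (Finset.mem_inter.mpr h)
        · exact hac1 (Finset.mem_inter.mpr h)
        · exact hbc1 (Finset.mem_inter.mpr h)





/-- `f` is an edge of the simplex graph "in direction v" -/
def EdgeIn (G : SimpleGraph V) (v : V) (f : Sym2 (Cl G)) : Prop :=
  ∃ p q : Cl G, f = s(p, q) ∧ symmDiff p.1 q.1 = {v}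

lemma edge_iff {f : Sym2 (Cl G)} :
    f ∈ (simplexGraph G).edgeSet ↔ ∃ v, EdgeIn G v f := by
  induction f using Sym2.ind with
  | _ p q =>
    rw [SimpleGraph.mem_edgeSet, simplex_adj_iff]
    constructor
    · rintro ⟨v, hv⟩; exact ⟨v, p, q, rfl, hv⟩
    · rintro ⟨v, a, b, hab, hd⟩
      rcases Sym2.eq_iff.mp hab with ⟨rfl, rfl⟩ | ⟨rfl, rfl⟩
      · exact ⟨v, hd⟩
      · exact ⟨v, by rwa [symmDiff_comm]⟩

lemma edgeIn_unique {f : Sym2 (Cl G)} {v w : V} (hv : EdgeIn G v f) (hw : EdgeIn G w f) :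
    v = w := by
  obtain ⟨p, q, rfl, hd⟩ := hv
  obtain ⟨a, b, hab, hd'⟩ := hw
  rcases Sym2.eq_iff.mp hab with ⟨rfl, rfl⟩ | ⟨rfl, rfl⟩
  · rw [hd] at hd'; exact (Finset.singleton_inj.mp hd')
  · rw [symmDiff_comm, hd] at hd'; exact (Finset.singleton_inj.mp hd')

set_option maxHeartbeats 1000000 in
lemma dw_core {p q x y : Cl G} {v w : V}
    (hpq : symmDiff p.1 q.1 = {v}) (hxy : symmDiff x.1 y.1 = {w}) :
    ((simplexGraph G).dist p x + (simplexGraph G).dist q y ≠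
      (simplexGraph G).dist p y + (simplexGraph G).dist q x) ↔ v = w := by
  have hq : q.1 = symmDiff p.1 {v} := by
    rw [← hpq, symmDiff_symmDiff_cancel_left]
  have hy : y.1 = symmDiff x.1 {w} := by
    rw [← hxy, symmDiff_symmDiff_cancel_left]
  simp only [simplex_dist_eq]
  set A := symmDiff p.1 x.1 with hA
  have hqy : symmDiff q.1 y.1 = symmDiff (symmDiff A {v}) {w} := by
    rw [hq, hy, hA]; ext a
    simp only [Finset.mem_symmDiff, Finset.mem_singleton]; tauto
  have hpy : symmDiff p.1 y.1 = symmDiff A {w} := by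
    rw [hy, hA]; ext a
    simp only [Finset.mem_symmDiff, Finset.mem_singleton]; tauto
  have hqx : symmDiff q.1 x.1 = symmDiff A {v} := by
    rw [hq, hA]; ext a
    simp only [Finset.mem_symmDiff, Finset.mem_singleton]; tauto
  rw [hqy, hpy, hqx]
  by_cases hvw : v = w
  · subst hvw
    simp only [iff_true]
    rw [symmDiff_symmDiff_cancel_right, card_sd_singleton]
    split_ifs with h
    · have : 1 ≤ A.card := Finset.card_pos.mpr ⟨_, h⟩
      simp only [ne_eq]
      omega
    · simp only [ne_eq]
      omega
  · simp only [hvw, iff_false, ne_eq, not_not]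
    have hmem : w ∈ symmDiff A {v} ↔ w ∈ A := by
      simp only [Finset.mem_symmDiff, Finset.mem_singleton]
      constructor
      · rintro (⟨h1, _⟩ | ⟨h1, _⟩)
        · exact h1
        · exact absurd h1 (Ne.symm hvw)
      · intro h; exact Or.inl ⟨h, Ne.symm hvw⟩
    rw [card_sd_singleton, card_sd_singleton, card_sd_singleton]
    simp only [hmem]
    by_cases hv : v ∈ A <;> by_cases hw : w ∈ A
    · have h2 : 2 ≤ A.card := Finset.one_lt_card.mpr ⟨v, hv, w, hw, hvw⟩
      simp only [if_pos hv, if_pos hw]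
      omega
    · have h1 : 1 ≤ A.card := Finset.card_pos.mpr ⟨v, hv⟩
      simp only [if_pos hv, if_neg hw]
      omega
    · have h1 : 1 ≤ A.card := Finset.card_pos.mpr ⟨w, hw⟩
      simp only [if_neg hv, if_pos hw]
      omega
    · simp only [if_neg hv, if_neg hw]
      omega

lemma dwrel_iff {f g : Sym2 (Cl G)} {v w : V}
    (hf : EdgeIn G v f) (hg : EdgeIn G w g) :
    DWRel (simplexGraph G) f g ↔ v = w := by
  constructor
  · rintro ⟨u, u', x, y, hfe, hge, hne⟩
    obtain ⟨p, q, hf1, hf2⟩ := hf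
    obtain ⟨a, b, hg1, hg2⟩ := hg
    have h1 : symmDiff u.1 u'.1 = {v} := by
      rw [hfe] at hf1
      rcases Sym2.eq_iff.mp hf1 with ⟨rfl, rfl⟩ | ⟨rfl, rfl⟩
      · exact hf2
      · rwa [symmDiff_comm]
    have h2 : symmDiff x.1 y.1 = {w} := by
      rw [hge] at hg1
      rcases Sym2.eq_iff.mp hg1 with ⟨rfl, rfl⟩ | ⟨rfl, rfl⟩
      · exact hg2
      · rwa [symmDiff_comm]
    exact (dw_core h1 h2).mp hne
  · rintro rfl
    obtain ⟨p, q, hf1, hf2⟩ := hf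
    obtain ⟨a, b, hg1, hg2⟩ := hg
    exact ⟨p, q, a, b, hf1, hg1, (dw_core hf2 hg2).mpr rfl⟩

lemma mem_theta {f g : Sym2 (Cl G)} {v : V} (hf : EdgeIn G v f)
    (hgE : g ∈ (simplexGraph G).edgeSet) :
    g ∈ thetaClassOf (simplexGraph G) f ↔ EdgeIn G v g := by
  constructor
  · rintro ⟨-, hdw⟩
    obtain ⟨w, hgw⟩ := edge_iff.mp hgE
    rw [(dwrel_iff hf hgw).mp hdw]
    exact hgw
  · intro hg
    exact ⟨hgE, (dwrel_iff hf hg).mpr rfl⟩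

/-- the canonical empty clique -/
def emptyCl (G : SimpleGraph V) : Cl G := ⟨∅, by simp⟩

/-- the canonical singleton clique -/
def singCl (G : SimpleGraph V) (v : V) : Cl G := ⟨{v}, by simp⟩

lemma edgeIn_canon (v : V) : EdgeIn G v s(emptyCl G, singCl G v) :=
  ⟨emptyCl G, singCl G v, rfl, by
    ext a; simp [Finset.mem_symmDiff, emptyCl, singCl]⟩

lemma adj_canon (v : V) : (simplexGraph G).Adj (emptyCl G) (singCl G v) := by
  rw [simplex_adj_iff]
  exact ⟨v, by ext a; simp [Finset.mem_symmDiff, emptyCl, singCl]⟩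

/-- the Θ-class of edges in direction `v` -/
def eClass (G : SimpleGraph V) (v : V) : Set (Sym2 (Cl G)) :=
  thetaClassOf (simplexGraph G) s(emptyCl G, singCl G v)

lemma theta_eq {f : Sym2 (Cl G)} {v : V} (hf : EdgeIn G v f) :
    thetaClassOf (simplexGraph G) f = eClass G v := by
  ext g
  by_cases hgE : g ∈ (simplexGraph G).edgeSet
  · rw [mem_theta hf hgE]
    exact (mem_theta (edgeIn_canon v) hgE).symm
  · constructor
    · rintro ⟨hE, -⟩; exact absurd hE hgE
    · rintro ⟨hE, -⟩; exact absurd hE hgE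

lemma eClass_injective : Function.Injective (eClass G) := by
  intro v w h
  have h1 : s(emptyCl G, singCl G v) ∈ eClass G v :=
    (mem_theta (edgeIn_canon v) ((adj_canon v) : _)).mpr (edgeIn_canon v)
  rw [h] at h1
  have h2 : EdgeIn G w s(emptyCl G, singCl G v) :=
    (mem_theta (edgeIn_canon w) ((adj_canon v) : _)).mp h1
  exact edgeIn_unique (edgeIn_canon v) h2

lemma eClass_isTheta (v : V) : IsThetaClass (simplexGraph G) (eClass G v) :=
  ⟨s(emptyCl G, singCl G v), (adj_canon v : _), rfl⟩

lemma sideW_in {p q : Cl G} {v : V} (h : symmDiff p.1 q.1 = {v}) (hv : v ∈ q.1) :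
    sideW (simplexGraph G) q p = {t : Cl G | v ∈ t.1} := by
  have hvp : v ∉ p.1 := by
    have : v ∈ symmDiff p.1 q.1 := by rw [h]; exact Finset.mem_singleton_self v
    rcases Finset.mem_symmDiff.mp this with ⟨_, h2⟩ | ⟨_, h2⟩
    · exact absurd hv h2
    · exact h2
  have hq : q.1 = symmDiff p.1 {v} := by rw [← h, symmDiff_symmDiff_cancel_left]
  ext t
  simp only [sideW, Set.mem_setOf_eq, simplex_dist_eq]
  have hqt : symmDiff q.1 t.1 = symmDiff (symmDiff p.1 t.1) {v} := by
    rw [hq]; ext a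
    simp only [Finset.mem_symmDiff, Finset.mem_singleton]; tauto
  have hmem : v ∈ symmDiff p.1 t.1 ↔ v ∈ t.1 := by
    simp only [Finset.mem_symmDiff]; tauto
  rw [hqt, card_sd_singleton]
  by_cases hvt : v ∈ t.1
  · have hm : v ∈ symmDiff p.1 t.1 := hmem.mpr hvt
    have h1 : 1 ≤ (symmDiff p.1 t.1).card := Finset.card_pos.mpr ⟨v, hm⟩
    simp only [if_pos hm, hvt, iff_true]
    omega
  · have hm : v ∉ symmDiff p.1 t.1 := fun hc => hvt (hmem.mp hc)
    simp only [if_neg hm, hvt, iff_false]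
    omega

lemma sideW_out {p q : Cl G} {v : V} (h : symmDiff p.1 q.1 = {v}) (hv : v ∈ q.1) :
    sideW (simplexGraph G) p q = {t : Cl G | v ∉ t.1} := by
  have hvp : v ∉ p.1 := by
    have : v ∈ symmDiff p.1 q.1 := by rw [h]; exact Finset.mem_singleton_self v
    rcases Finset.mem_symmDiff.mp this with ⟨_, h2⟩ | ⟨_, h2⟩
    · exact absurd hv h2
    · exact h2
  have hq : q.1 = symmDiff p.1 {v} := by rw [← h, symmDiff_symmDiff_cancel_left]
  ext t
  simp only [sideW, Set.mem_setOf_eq, simplex_dist_eq]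
  have hqt : symmDiff q.1 t.1 = symmDiff (symmDiff p.1 t.1) {v} := by
    rw [hq]; ext a
    simp only [Finset.mem_symmDiff, Finset.mem_singleton]; tauto
  have hmem : v ∈ symmDiff p.1 t.1 ↔ v ∈ t.1 := by
    simp only [Finset.mem_symmDiff]; tauto
  rw [hqt, card_sd_singleton]
  by_cases hvt : v ∈ t.1
  · have hm : v ∈ symmDiff p.1 t.1 := hmem.mpr hvt
    simp only [if_pos hm, hvt, iff_false, not_true]
    omega
  · have hm : v ∉ symmDiff p.1 t.1 := fun hc => hvt (hmem.mp hc)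
    have h1 : 0 ≤ (symmDiff p.1 t.1).card := Nat.zero_le _
    simp only [if_neg hm, hvt, iff_true, not_false_iff]
    omega

lemma sd_canon (v : V) : symmDiff (emptyCl G (V := V)).1 (singCl G v).1 = {v} := by
  ext a; simp [Finset.mem_symmDiff, emptyCl, singCl]

/-- the clique {v, w} for adjacent v w -/
def pairCl {v w : V} (h : G.Adj v w) : Cl G :=
  ⟨{v, w}, by
    simp only [Finset.coe_insert, Finset.coe_singleton]
    exact SimpleGraph.isClique_pair.mpr (fun _ => h)⟩

lemma cross_iff (v w : V) :
    (crossingGraph (simplexGraph G)).Adj ⟨eClass G v, eClass_isTheta v⟩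
      ⟨eClass G w, eClass_isTheta w⟩ ↔ G.Adj v w := by
  constructor
  · rintro ⟨hne, hcross⟩
    obtain ⟨a, b, u, u', hab, huu, hC1, hC2, n1, n2, n3, n4⟩ := hcross
    have hvw : v ≠ w := by
      rintro rfl
      exact hne rfl
    have finish : ∀ t : Cl G, v ∈ t.1 → w ∈ t.1 → G.Adj v w := fun t h1 h2 =>
      t.2 (Finset.mem_coe.mpr h1) (Finset.mem_coe.mpr h2) hvw
    obtain ⟨z, hz⟩ := (simplex_adj_iff a b).mp hab
    have hzv : z = v := by
      have h1 : thetaClassOf (simplexGraph G) s(a, b) = eClass G z :=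
        theta_eq ⟨a, b, rfl, hz⟩
      exact eClass_injective (h1 ▸ hC1).symm
    rw [hzv] at hz
    obtain ⟨z', hz'⟩ := (simplex_adj_iff u u').mp huu
    have hzw : z' = w := by
      have h1 : thetaClassOf (simplexGraph G) s(u, u') = eClass G z' :=
        theta_eq ⟨u, u', rfl, hz'⟩
      exact eClass_injective (h1 ▸ hC2).symm
    rw [hzw] at hz'
    have hvmem : v ∈ symmDiff a.1 b.1 := by rw [hz]; exact Finset.mem_singleton_self v
    have hwmem : w ∈ symmDiff u.1 u'.1 := by rw [hz']; exact Finset.mem_singleton_self w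
    rcases Finset.mem_symmDiff.mp hvmem with ⟨hva, hvb⟩ | ⟨hvb, hva⟩ <;>
      rcases Finset.mem_symmDiff.mp hwmem with ⟨hwu, hwu'⟩ | ⟨hwu', hwu⟩
    · -- v ∈ a, w ∈ u : use n1 (sideW a b ∩ sideW u u')
      have e1 : sideW (simplexGraph G) a b = {t : Cl G | v ∈ t.1} :=
        sideW_in (by rwa [symmDiff_comm]) hva
      have e2 : sideW (simplexGraph G) u u' = {t : Cl G | w ∈ t.1} :=
        sideW_in (by rwa [symmDiff_comm]) hwu
      obtain ⟨t, ht1, ht2⟩ := n1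
      rw [e1] at ht1; rw [e2] at ht2
      exact finish t ht1 ht2
    · -- v ∈ a, w ∈ u' : use n3 (sideW a b ∩ sideW u' u)
      have e1 : sideW (simplexGraph G) a b = {t : Cl G | v ∈ t.1} :=
        sideW_in (by rwa [symmDiff_comm]) hva
      have e2 : sideW (simplexGraph G) u' u = {t : Cl G | w ∈ t.1} :=
        sideW_in hz' hwu'
      obtain ⟨t, ht1, ht2⟩ := n3
      rw [e1] at ht1; rw [e2] at ht2
      exact finish t ht1 ht2
    · -- v ∈ b, w ∈ u : use n2 (sideW b a ∩ sideW u u')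
      have e1 : sideW (simplexGraph G) b a = {t : Cl G | v ∈ t.1} :=
        sideW_in hz hvb
      have e2 : sideW (simplexGraph G) u u' = {t : Cl G | w ∈ t.1} :=
        sideW_in (by rwa [symmDiff_comm]) hwu
      obtain ⟨t, ht1, ht2⟩ := n2
      rw [e1] at ht1; rw [e2] at ht2
      exact finish t ht1 ht2
    · -- v ∈ b, w ∈ u' : use n4 (sideW b a ∩ sideW u' u)
      have e1 : sideW (simplexGraph G) b a = {t : Cl G | v ∈ t.1} :=
        sideW_in hz hvb
      have e2 : sideW (simplexGraph G) u' u = {t : Cl G | w ∈ t.1} :=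
        sideW_in hz' hwu'
      obtain ⟨t, ht1, ht2⟩ := n4
      rw [e1] at ht1; rw [e2] at ht2
      exact finish t ht1 ht2
  · intro h
    have hvw : v ≠ w := h.ne
    refine ⟨?_, emptyCl G, singCl G v, emptyCl G, singCl G w, adj_canon v, adj_canon w,
      rfl, rfl, ?_, ?_, ?_, ?_⟩
    · intro hEq
      exact hvw (eClass_injective (congrArg Subtype.val hEq))
    · rw [sideW_out (sd_canon v) (by simp [singCl]), sideW_out (sd_canon w) (by simp [singCl])]
      exact ⟨emptyCl G, by simp [emptyCl], by simp [emptyCl]⟩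
    · rw [sideW_in (sd_canon v) (by simp [singCl]), sideW_out (sd_canon w) (by simp [singCl])]
      exact ⟨singCl G v, by simp [singCl], by simp [singCl, Ne.symm hvw]⟩
    · rw [sideW_out (sd_canon v) (by simp [singCl]), sideW_in (sd_canon w) (by simp [singCl])]
      exact ⟨singCl G w, by simp [singCl, hvw], by simp [singCl]⟩
    · rw [sideW_in (sd_canon v) (by simp [singCl]), sideW_in (sd_canon w) (by simp [singCl])]
      exact ⟨pairCl h, by simp [pairCl], by simp [pairCl]⟩

lemma toCross_bijective :
    Function.Bijective (fun v : V => (⟨eClass G v, eClass_isTheta v⟩ :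
      {C : Set (Sym2 (Cl G)) // IsThetaClass (simplexGraph G) C})) := by
  constructor
  · intro v w h
    exact eClass_injective (congrArg Subtype.val h)
  · rintro ⟨C, hC⟩
    obtain ⟨e, heE, rfl⟩ := hC
    obtain ⟨v, hv⟩ := edge_iff.mp heE
    exact ⟨v, Subtype.ext (theta_eq hv).symm⟩

noncomputable def simplexIso (G : SimpleGraph V) :
    G ≃g crossingGraph (simplexGraph G) where
  toEquiv := Equiv.ofBijective _ (toCross_bijective (G := G))
  map_rel_iff' := by
    intro v w
    exact cross_iff v w


end SXAux

/-- For any finite graph `G`, the simplex graph `S(G)` is a median graph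
and `G` is isomorphic to its crossing graph `S(G)^#`; in particular every finite graph is
the crossing graph of some median graph. -/
theorem simplexGraph_isMedian_and_crossingGraph_iso {V : Type*} [Finite V] [DecidableEq V]
    (G : SimpleGraph V) :
    IsMedianGraph (simplexGraph G) ∧ Nonempty (G ≃g crossingGraph (simplexGraph G)) :=
  ⟨SXAux.simplex_isMedian, ⟨SXAux.simplexIso G⟩⟩
end

section
/- Let n ≥ 1 and m ≥ 0 be integers and let G = K_n ∪ mK_1 be the disjoint union of the complete graph K_n and m isolated vertices. Then Cl(G,x) = (x+1)^n + m·x. Moreover, if n ≥ 6 and m ≥ (n² − 3n)/2 + 1, then Cl(G,x) is not unimodal. -/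
open SimpleGraph Polynomial

/-- The disjoint union `K_n ∪ m·K_1` of a complete graph on `n` vertices and `m` isolated
vertices. -/
def completeUnionIsolated (n m : ℕ) : SimpleGraph (Fin n ⊕ Fin m) where
  Adj x y := match x, y with
    | Sum.inl i, Sum.inl j => i ≠ j
    | Sum.inl _, Sum.inr _ => False
    | Sum.inr _, Sum.inl _ => False
    | Sum.inr _, Sum.inr _ => False
  symm := by
    constructor
    rintro (i | i) (j | j) h
    · exact h.symm
    · exact h
    · exact h
    · exact h
  loopless := by
    constructor
    rintro (i | i) h
    · exact h rfl
    · exact h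

lemma cui_count_zero (n m : ℕ) : cliqueCount (completeUnionIsolated n m) 0 = 1 := by
  haveI : Unique {s : Finset (Fin n ⊕ Fin m) // (completeUnionIsolated n m).IsNClique 0 s} :=
    { default := ⟨∅, by simp [SimpleGraph.isNClique_zero]⟩
      uniq := fun s => Subtype.ext (by simpa [SimpleGraph.isNClique_zero] using s.2) }
  exact Nat.card_unique

lemma cui_count_one (n m : ℕ) : cliqueCount (completeUnionIsolated n m) 1 = n + m := by
  have e : (Fin n ⊕ Fin m) ≃
      {s : Finset (Fin n ⊕ Fin m) // (completeUnionIsolated n m).IsNClique 1 s} := by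
    refine Equiv.ofBijective
      (fun v => ⟨{v}, SimpleGraph.isNClique_one.mpr ⟨v, rfl⟩⟩) ⟨?_, ?_⟩
    · intro a b h
      exact Finset.singleton_injective (congrArg Subtype.val h)
    · rintro ⟨s, hs⟩
      obtain ⟨a, rfl⟩ := SimpleGraph.isNClique_one.mp hs
      exact ⟨a, rfl⟩
  rw [cliqueCount, ← Nat.card_congr e]
  simp [Nat.card_eq_fintype_card]

lemma cui_count_two (n m i : ℕ) (hi : 2 ≤ i) :
    cliqueCount (completeUnionIsolated n m) i = n.choose i := by
  set G := completeUnionIsolated n m with hG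
  have key : ∀ s : Finset (Fin n ⊕ Fin m), G.IsNClique i s →
      ∀ x ∈ s, ∃ a : Fin n, x = Sum.inl a := by
    intro s hs x hx
    match x with
    | Sum.inl a => exact ⟨a, rfl⟩
    | Sum.inr b =>
      obtain ⟨y, hy, hne⟩ := Finset.exists_mem_ne (by rw [hs.2]; omega) (Sum.inr b)
      have hadj : G.Adj y (Sum.inr b) := hs.1 (Finset.mem_coe.mpr hy) (Finset.mem_coe.mpr hx) hne
      rcases y with a | a
      · exact (hadj : False).elim
      · exact (hadj : False).elim
  have e : {t : Finset (Fin n) // t.card = i} ≃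
      {s : Finset (Fin n ⊕ Fin m) // G.IsNClique i s} := by
    refine Equiv.ofBijective (fun t =>
      ⟨t.1.map ⟨Sum.inl, Sum.inl_injective⟩, ?_, by rw [Finset.card_map]; exact t.2⟩)
      ⟨?_, ?_⟩
    · intro x hx y hy hxy
      simp only [Finset.coe_map, Set.mem_image, Finset.mem_coe] at hx hy
      obtain ⟨a, -, rfl⟩ := hx
      obtain ⟨b, -, rfl⟩ := hy
      show a ≠ b
      rintro rfl
      exact hxy rfl
    · intro a b h
      exact Subtype.ext (Finset.map_injective _ (congrArg Subtype.val h))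
    · rintro ⟨s, hs⟩
      refine ⟨⟨s.preimage Sum.inl Sum.inl_injective.injOn, ?_⟩, ?_⟩
      · have hmap : (s.preimage Sum.inl Sum.inl_injective.injOn).map
            ⟨Sum.inl, Sum.inl_injective⟩ = s := by
          ext x
          simp only [Finset.mem_map, Finset.mem_preimage, Function.Embedding.coeFn_mk]
          constructor
          · rintro ⟨a, ha, rfl⟩; exact ha
          · intro hx
            obtain ⟨a, rfl⟩ := key s hs x hx
            exact ⟨a, hx, rfl⟩
        rw [← Finset.card_map ⟨Sum.inl, Sum.inl_injective⟩, hmap]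
        exact hs.2
      · apply Subtype.ext
        ext x
        simp only [Finset.mem_map, Finset.mem_preimage, Function.Embedding.coeFn_mk]
        constructor
        · rintro ⟨a, ha, rfl⟩; exact ha
        · intro hx
          obtain ⟨a, rfl⟩ := key s hs x hx
          exact ⟨a, hx, rfl⟩
  rw [cliqueCount, ← Nat.card_congr e, Nat.card_eq_fintype_card, Fintype.card_subtype,
    ← Finset.powerset_univ, ← Finset.powersetCard_eq_filter,
    Finset.card_powersetCard, Finset.card_univ, Fintype.card_fin]

lemma cui_coeff (n m : ℕ) (hn : 1 ≤ n) (k : ℕ) :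
    (cliquePoly (completeUnionIsolated n m)).coeff k =
      n.choose k + (if k = 1 then m else 0) := by
  have hcard : Nat.card (Fin n ⊕ Fin m) = n + m := by
    simp [Nat.card_eq_fintype_card]
  rw [cliquePoly, hcard]
  simp only [Polynomial.finset_sum_coeff, Polynomial.coeff_C_mul, Polynomial.coeff_X_pow,
    mul_ite, mul_one, mul_zero, Finset.sum_ite_eq, Finset.mem_range]
  by_cases hk : k < n + m + 1
  · rw [if_pos hk]
    match k with
    | 0 => simp [cui_count_zero]
    | 1 => simp [cui_count_one, Nat.choose_one_right]
    | (j+2) => simp [cui_count_two n m (j+2) (by omega)]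
  · rw [if_neg hk, Nat.choose_eq_zero_of_lt (by omega), if_neg (by omega)]; rfl

/-- For `n ≥ 1`, `m ≥ 0` and `G = K_n ∪ m·K_1`,
`Cl(G,x) = (x+1)^n + m·x`; moreover if `n ≥ 6` and `m ≥ (n² − 3n)/2 + 1` then `Cl(G,x)` is
not unimodal. -/
theorem cliquePoly_completeUnionIsolated (n m : ℕ) (hn : 1 ≤ n) :
    cliquePoly (completeUnionIsolated n m) =
      (Polynomial.X + 1) ^ n + Polynomial.C m * Polynomial.X ∧
    (6 ≤ n → (n ^ 2 - 3 * n) / 2 + 1 ≤ m →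
      ¬ PolyUnimodal (cliquePoly (completeUnionIsolated n m))) := by
  constructor
  · ext k
    rw [cui_coeff n m hn k, Polynomial.coeff_add, Polynomial.coeff_X_add_one_pow,
      Polynomial.coeff_C_mul, Polynomial.coeff_X]
    by_cases hk : k = 1 <;> simp [hk, eq_comm]
  · intro h6 hm hPU
    obtain ⟨m₀, hup, hdn⟩ := hPU
    have e1 : (cliquePoly (completeUnionIsolated n m)).coeff 1 = n + m := by
      rw [cui_coeff n m hn]; simp [Nat.choose_one_right]
    have e2 : (cliquePoly (completeUnionIsolated n m)).coeff 2 = n.choose 2 := by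
      rw [cui_coeff n m hn]; simp
    have e3 : (cliquePoly (completeUnionIsolated n m)).coeff 3 = n.choose 3 := by
      rw [cui_coeff n m hn]; simp
    have h23 : n.choose 2 < n.choose 3 := by
      have h0 : 0 < n.choose 2 := Nat.choose_pos (by omega)
      have hq : n.choose 3 * 3 = n.choose 2 * (n - 2) := Nat.choose_succ_right_eq n 2
      have h4 : n.choose 2 * 4 ≤ n.choose 2 * (n - 2) := Nat.mul_le_mul le_rfl (by omega)
      omega
    have h12 : n.choose 2 < n + m := by
      have hc2 : n.choose 2 = n * (n - 1) / 2 := Nat.choose_two_right n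
      have hmul : n * (n - 1) = n * n - n := by rw [Nat.mul_sub, Nat.mul_one]
      rw [pow_two] at hm
      generalize n * n = p at hm hmul
      omega
    rcases le_or_gt m₀ 1 with h | h
    · have := hdn 2 (by omega)
      rw [show (2:ℕ)+1 = 3 from rfl, e3, e2] at this
      omega
    · have := hup 1 (by omega)
      rw [show (1:ℕ)+1 = 2 from rfl, e2, e1] at this
      omega
end

section
/- Let G be a finite median graph with α_3(G) > α_2(G), and let G' be obtained from G by attaching m pendant vertices, where m ≥ α_2(G) − α_1(G) + 1. Then G' is a median graph whose cube polynomial C(G',x) = C(G,x) + m·(x+1) is not unimodal. -/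
open SimpleGraph Polynomial

/-- The graph obtained from `G` by attaching `m` pendant vertices, the `j`-th pendant being
joined by a single edge to the vertex `f j` of `G`. -/
def withPendants {V : Type*} (G : SimpleGraph V) (m : ℕ) (f : Fin m → V) :
    SimpleGraph (V ⊕ Fin m) where
  Adj x y := match x, y with
    | Sum.inl u, Sum.inl v => G.Adj u v
    | Sum.inl u, Sum.inr j => u = f j
    | Sum.inr j, Sum.inl v => f j = v
    | Sum.inr _, Sum.inr _ => False
  symm := by
    constructor
    rintro (u | i) (v | j) h
    · exact h.symm
    · exact h.symm
    · exact h.symm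
    · exact h
  loopless := by
    constructor
    rintro (u | i) h
    · exact G.irrefl h
    · exact h


namespace PendantAux
variable {V : Type*} {m : ℕ} {G : SimpleGraph V} {f : Fin m → V}

def pproj (f : Fin m → V) : V ⊕ Fin m → V := Sum.elim id f
def peps : V ⊕ Fin m → ℕ := Sum.elim (fun _ => 0) (fun _ => 1)

def inlHom (G : SimpleGraph V) (f : Fin m → V) : G →g withPendants G m f where
  toFun := Sum.inl
  map_rel' := fun h => h

lemma adj_inr (j : Fin m) : (withPendants G m f).Adj (Sum.inr j) (Sum.inl (f j)) := rfl

def toInl (x : V ⊕ Fin m) : (withPendants G m f).Walk x (Sum.inl (pproj f x)) :=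
  match x with
  | Sum.inl _ => Walk.nil
  | Sum.inr j => Walk.cons (adj_inr j) Walk.nil

lemma toInl_length (x : V ⊕ Fin m) : (toInl (G := G) (f := f) x).length = peps x := by
  cases x <;> rfl

lemma connected' (hc : G.Connected) : (withPendants G m f).Connected := by
  rw [connected_iff]
  refine ⟨?_, ⟨Sum.inl hc.nonempty.some⟩⟩
  intro x y
  exact ((toInl x).reachable.trans
    (((hc (pproj f x) (pproj f y)).map (inlHom G f)))).trans (toInl y).reachable.symm

lemma project_walk {x y : V ⊕ Fin m} (p : (withPendants G m f).Walk x y) (hxy : x ≠ y) :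
    ∃ q : G.Walk (pproj f x) (pproj f y), q.length + peps x + peps y ≤ p.length := by
  induction p with
  | nil => exact absurd rfl hxy
  | @cons a b c h p ih =>
    obtain u | j := a
    · obtain v | j := b
      · have h' : G.Adj u v := h
        by_cases hby : (Sum.inl v : V ⊕ Fin m) = c
        · subst hby
          exact ⟨h'.toWalk, by simp [peps, pproj]⟩
        · obtain ⟨q, hq⟩ := ih hby
          refine ⟨Walk.cons h' q, ?_⟩
          show q.length + 1 + peps (Sum.inl u) + peps c ≤ _
          simp only [peps, pproj, Walk.length_cons, Sum.elim_inl] at hq ⊢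
          omega
      · have h' : u = f j := h
        subst h'
        by_cases hby : (Sum.inr j : V ⊕ Fin m) = c
        · subst hby
          exact ⟨Walk.nil, by simp [peps, pproj]⟩
        · obtain ⟨q, hq⟩ := ih hby
          refine ⟨q, ?_⟩
          simp only [peps, pproj, Walk.length_cons, Sum.elim_inl, Sum.elim_inr] at hq ⊢
          omega
    · obtain v | k := b
      · have h' : f j = v := h
        subst h'
        by_cases hby : (Sum.inl (f j) : V ⊕ Fin m) = c
        · subst hby
          exact ⟨Walk.nil, by simp [peps, pproj]⟩
        · obtain ⟨q, hq⟩ := ih hby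
          refine ⟨q, ?_⟩
          simp only [peps, pproj, Walk.length_cons, Sum.elim_inl, Sum.elim_inr] at hq ⊢
          omega
      · exact h.elim

lemma dist_formula (hc : G.Connected) {x y : V ⊕ Fin m} (hxy : x ≠ y) :
    (withPendants G m f).dist x y = G.dist (pproj f x) (pproj f y) + peps x + peps y := by
  have hc' : (withPendants G m f).Connected := connected' hc
  apply le_antisymm
  · obtain ⟨p, hp⟩ := hc.exists_walk_length_eq_dist (pproj f x) (pproj f y)
    have hle := SimpleGraph.dist_le
      ((toInl x).append (((p.map (inlHom G f))).append (toInl (G := G) (f := f) y).reverse))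
    have e1 := Walk.length_append (toInl (G := G) (f := f) x)
      ((p.map (inlHom G f)).append (toInl (G := G) (f := f) y).reverse)
    have e2 : @Walk.length _ (withPendants G m f) (Sum.inl (pproj f x)) y
        ((p.map (inlHom G f)).append (toInl (G := G) (f := f) y).reverse) =
        (p.map (inlHom G f)).length + (toInl (G := G) (f := f) y).reverse.length :=
      Walk.length_append _ _
    have e3 := Walk.length_reverse (toInl (G := G) (f := f) y)
    have e4 := Walk.length_map (inlHom G f) p
    have e5 := toInl_length (G := G) (f := f) x
    have e6 := toInl_length (G := G) (f := f) y
    omega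
  · obtain ⟨p, hp⟩ := hc'.exists_walk_length_eq_dist x y
    obtain ⟨q, hq⟩ := project_walk p hxy
    have := SimpleGraph.dist_le q
    omega

lemma dist_inl (hc : G.Connected) (x : V ⊕ Fin m) (w : V) :
    (withPendants G m f).dist x (Sum.inl w) = G.dist (pproj f x) w + peps x := by
  by_cases hxw : x = Sum.inl w
  · subst hxw
    simp [peps, pproj, SimpleGraph.dist_self]
  · simpa [peps, pproj] using dist_formula hc hxw

lemma pend_detour (hc : G.Connected) {a b : V ⊕ Fin m} (j : Fin m)
    (ha : a ≠ Sum.inr j) (hb : b ≠ Sum.inr j) (hab : a ≠ b) :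
    (withPendants G m f).dist a b + 2 ≤
      (withPendants G m f).dist a (Sum.inr j) + (withPendants G m f).dist (Sum.inr j) b := by
  rw [dist_formula hc ha, dist_formula hc (Ne.symm hb), dist_formula hc hab]
  have ht := hc.dist_triangle (u := pproj f a) (v := f j) (w := pproj f b)
  simp only [peps, pproj, Sum.elim_inr, Sum.elim_inl] at ht ⊢
  omega

lemma median' (hmed : IsMedianGraph G) : IsMedianGraph (withPendants G m f) := by
  obtain ⟨hc, hmd⟩ := hmed
  have hc' : (withPendants G m f).Connected := connected' hc
  refine ⟨hc', ?_⟩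
  intro x y z
  by_cases hxy : x = y
  · subst hxy
    refine ⟨x, ⟨by simp, by simp, by simp⟩, ?_⟩
    rintro t ⟨h1, -, -⟩
    rw [SimpleGraph.dist_self, SimpleGraph.dist_comm] at h1
    have h0 : (withPendants G m f).dist t x = 0 := by omega
    exact hc'.dist_eq_zero_iff.mp h0
  by_cases hxz : x = z
  · subst hxz
    refine ⟨x, ⟨by simp, by simp, by simp [SimpleGraph.dist_comm]⟩, ?_⟩
    rintro t ⟨-, h2, -⟩
    rw [SimpleGraph.dist_self, SimpleGraph.dist_comm] at h2
    have h0 : (withPendants G m f).dist t x = 0 := by omega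
    exact hc'.dist_eq_zero_iff.mp h0
  by_cases hyz : y = z
  · subst hyz
    refine ⟨y, ⟨by simp, by simp, by simp⟩, ?_⟩
    rintro t ⟨-, -, h3⟩
    rw [SimpleGraph.dist_self, SimpleGraph.dist_comm] at h3
    have h0 : (withPendants G m f).dist t y = 0 := by omega
    exact hc'.dist_eq_zero_iff.mp h0
  obtain ⟨w, ⟨hw1, hw2, hw3⟩, hwu⟩ := hmd (pproj f x) (pproj f y) (pproj f z)
  have dxy := dist_formula (f := f) hc hxy
  have dxz := dist_formula (f := f) hc hxz
  have dyz := dist_formula (f := f) hc hyz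
  refine ⟨Sum.inl w, ?_, ?_⟩
  · have ex := dist_inl (f := f) hc x w
    have ey := dist_inl (f := f) hc y w
    have ez := dist_inl (f := f) hc z w
    have c1 : G.dist w (pproj f y) = G.dist (pproj f y) w := SimpleGraph.dist_comm
    have c2 : G.dist w (pproj f z) = G.dist (pproj f z) w := SimpleGraph.dist_comm
    have c3 : (withPendants G m f).dist (Sum.inl w) y = (withPendants G m f).dist y (Sum.inl w) :=
      SimpleGraph.dist_comm
    have c4 : (withPendants G m f).dist (Sum.inl w) z = (withPendants G m f).dist z (Sum.inl w) :=
      SimpleGraph.dist_comm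
    refine ⟨by omega, by omega, by omega⟩
  · rintro t ⟨h1, h2, h3⟩
    obtain w' | j := t
    · have ex := dist_inl (f := f) hc x w'
      have ey := dist_inl (f := f) hc y w'
      have ez := dist_inl (f := f) hc z w'
      have c1 : G.dist w' (pproj f y) = G.dist (pproj f y) w' := SimpleGraph.dist_comm
      have c2 : G.dist w' (pproj f z) = G.dist (pproj f z) w' := SimpleGraph.dist_comm
      have c3 : (withPendants G m f).dist (Sum.inl w') y =
          (withPendants G m f).dist y (Sum.inl w') := SimpleGraph.dist_comm
      have c4 : (withPendants G m f).dist (Sum.inl w') z =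
          (withPendants G m f).dist z (Sum.inl w') := SimpleGraph.dist_comm
      have m1 : G.dist (pproj f x) w' + G.dist w' (pproj f y) =
          G.dist (pproj f x) (pproj f y) := by omega
      have m2 : G.dist (pproj f x) w' + G.dist w' (pproj f z) =
          G.dist (pproj f x) (pproj f z) := by omega
      have m3 : G.dist (pproj f y) w' + G.dist w' (pproj f z) =
          G.dist (pproj f y) (pproj f z) := by omega
      exact congrArg Sum.inl (hwu w' ⟨m1, m2, m3⟩)
    · exfalso
      by_cases hx : x = Sum.inr j
      · have hy : y ≠ Sum.inr j := fun hh => hxy (hx ▸ hh ▸ rfl)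
        have hz : z ≠ Sum.inr j := fun hh => hxz (hx ▸ hh ▸ rfl)
        have := pend_detour (f := f) hc j hy hz hyz
        omega
      · by_cases hy : y = Sum.inr j
        · have hz : z ≠ Sum.inr j := fun hh => hyz (hy ▸ hh ▸ rfl)
          have := pend_detour (f := f) hc j hx hz hxz
          omega
        · have := pend_detour (f := f) hc j hx hy hxy
          omega

noncomputable def induceInlIso (G : SimpleGraph V) (f : Fin m → V) (s : Set V) :
    G.induce s ≃g (withPendants G m f).induce (Sum.inl '' s) where
  toEquiv := Equiv.Set.image Sum.inl s Sum.inl_injective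
  map_rel_iff' := Iff.rfl

lemma hypercube_adj_update {n : ℕ} (v : Fin n → Bool) (k : Fin n) :
    (hypercube n).Adj (Function.update v k (!(v k))) v := by
  refine ⟨k, by simp, ?_⟩
  intro j hj
  by_contra hjk
  rw [Function.update_of_ne hjk] at hj
  exact hj rfl

lemma q1_adj_iff (g h : Fin 1 → Bool) : (hypercube 1).Adj g h ↔ g ≠ h := by
  constructor
  · rintro ⟨i, hi, -⟩ he
    exact hi (congrFun he i)
  · intro hne
    refine ⟨0, ?_, fun j _ => Subsingleton.elim j 0⟩
    intro h0
    apply hne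
    funext i
    rw [Subsingleton.elim i 0]
    exact h0

lemma adj_inr_right {j : Fin m} {x : V ⊕ Fin m} (h : (withPendants G m f).Adj x (Sum.inr j)) :
    x = Sum.inl (f j) := by
  obtain u | k := x
  · exact congrArg Sum.inl h
  · exact h.elim

lemma subset_range_inl {i : ℕ} (hi : 2 ≤ i) (S : Set (V ⊕ Fin m))
    (φ : (withPendants G m f).induce S ≃g hypercube i) :
    S ⊆ Set.range Sum.inl := by
  rintro x hx
  obtain u | j := x
  · exact ⟨u, rfl⟩
  exfalso
  set a : S := ⟨Sum.inr j, hx⟩ with ha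
  set v : Fin i → Bool := φ a with hv
  have h01 : (⟨0, by omega⟩ : Fin i) ≠ ⟨1, by omega⟩ := by simp
  set n1 := φ.symm (Function.update v ⟨0, by omega⟩ (!(v ⟨0, by omega⟩)))
  set n2 := φ.symm (Function.update v ⟨1, by omega⟩ (!(v ⟨1, by omega⟩)))
  have hsa : φ.symm v = a := by rw [hv, φ.symm_apply_apply]
  have a1 : ((withPendants G m f).induce S).Adj n1 a := by
    have := φ.symm.map_rel_iff.mpr (hypercube_adj_update v ⟨0, by omega⟩)
    rwa [hsa] at this
  have a2 : ((withPendants G m f).induce S).Adj n2 a := by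
    have := φ.symm.map_rel_iff.mpr (hypercube_adj_update v ⟨1, by omega⟩)
    rwa [hsa] at this
  have hn1 : (n1 : V ⊕ Fin m) = Sum.inl (f j) := adj_inr_right a1
  have hn2 : (n2 : V ⊕ Fin m) = Sum.inl (f j) := adj_inr_right a2
  have : n1 = n2 := Subtype.ext (hn1.trans hn2.symm)
  have hfun : Function.update v ⟨0, by omega⟩ (!(v ⟨0, by omega⟩)) =
      Function.update v ⟨1, by omega⟩ (!(v ⟨1, by omega⟩)) := φ.symm.toEquiv.injective this
  have := congrFun hfun ⟨0, by omega⟩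
  rw [Function.update_self, Function.update_of_ne h01] at this
  exact (Bool.not_ne_self _) this

lemma cubeCount_high {i : ℕ} (hi : 2 ≤ i) :
    cubeCount (withPendants G m f) i = cubeCount G i := by
  unfold cubeCount
  refine (Nat.card_congr (Equiv.ofBijective
    (fun s : {s : Set V // Nonempty ((G.induce s) ≃g hypercube i)} =>
      (⟨Sum.inl '' s.1, s.2.map fun ψ => (induceInlIso G f s.1).symm.trans ψ⟩ :
        {S : Set (V ⊕ Fin m) // Nonempty (((withPendants G m f).induce S) ≃g hypercube i)}))
    ⟨?_, ?_⟩)).symm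
  · rintro ⟨s, hs⟩ ⟨s', hs'⟩ h
    have := congrArg Subtype.val h
    exact Subtype.ext (Set.image_injective.mpr Sum.inl_injective this)
  · rintro ⟨S, ⟨φ⟩⟩
    have hsub := subset_range_inl hi S φ
    have himg : Sum.inl '' (Sum.inl ⁻¹' S) = S := Set.image_preimage_eq_of_subset hsub
    refine ⟨⟨Sum.inl ⁻¹' S, ⟨(induceInlIso G f _).trans (himg.symm ▸ φ)⟩⟩, Subtype.ext himg⟩

lemma q0_char {W : Type*} {H : SimpleGraph W} {S : Set W}
    (φ : H.induce S ≃g hypercube 0) : ∃ w, S = {w} := by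
  obtain ⟨w, hw⟩ : S.Nonempty := ⟨↑(φ.symm default), (φ.symm default).2⟩
  refine ⟨w, Set.eq_singleton_iff_unique_mem.mpr ⟨hw, ?_⟩⟩
  intro y hy
  have : (⟨y, hy⟩ : S) = ⟨w, hw⟩ := φ.toEquiv.injective (Subsingleton.elim _ _)
  exact congrArg Subtype.val this

lemma q0_iso {W : Type*} (H : SimpleGraph W) (w : W) :
    Nonempty (H.induce ({w} : Set W) ≃g hypercube 0) := by
  refine ⟨⟨Equiv.ofUnique _ _, ?_⟩⟩
  intro a b
  constructor
  · rintro ⟨i, -, -⟩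
    exact i.elim0
  · intro h
    rw [Subsingleton.elim a b] at h
    exact absurd h ((H.induce {w}).irrefl)

lemma cubeCount_zero {W : Type*} (H : SimpleGraph W) : cubeCount H 0 = Nat.card W := by
  unfold cubeCount
  refine (Nat.card_congr (Equiv.ofBijective
    (fun w : W => (⟨({w} : Set W), q0_iso H w⟩ :
      {s : Set W // Nonempty ((H.induce s) ≃g hypercube 0)})) ⟨?_, ?_⟩)).symm
  · intro w w' h
    simpa using congrArg Subtype.val h
  · rintro ⟨s, ⟨φ⟩⟩
    obtain ⟨w, rfl⟩ := q0_char φ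
    exact ⟨w, rfl⟩

lemma q1_iso {W : Type*} {H : SimpleGraph W} {a b : W} (hab : H.Adj a b) :
    Nonempty (H.induce ({a, b} : Set W) ≃g hypercube 1) := by
  classical
  have hne : a ≠ b := hab.ne
  have hma : a ∈ ({a, b} : Set W) := Set.mem_insert _ _
  have hmb : b ∈ ({a, b} : Set W) := Set.mem_insert_iff.mpr (Or.inr rfl)
  refine ⟨⟨⟨fun x => fun _ => if (x : W) = b then true else false,
    fun g => if g 0 then ⟨b, hmb⟩ else ⟨a, hma⟩, ?_, ?_⟩, ?_⟩⟩
  · rintro ⟨x, hx⟩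
    rcases hx with rfl | rfl
    · simp [hne]
    · simp
  · intro g
    funext i
    rw [Subsingleton.elim i 0]
    by_cases hg : g 0
    · simp [hg]
    · simp [hg, hne]
  · rintro ⟨x, hx⟩ ⟨y, hy⟩
    rw [q1_adj_iff]
    rcases hx with rfl | rfl <;> rcases hy with rfl | rfl
    · exact ⟨fun h => absurd rfl h, fun h => absurd h (H.loopless.irrefl _)⟩
    · refine ⟨fun _ => hab, fun _ hcontra => ?_⟩
      have := congrFun hcontra 0
      simp [hne] at this
    · refine ⟨fun _ => hab.symm, fun _ hcontra => ?_⟩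
      have := congrFun hcontra 0
      simp [hne] at this
    · exact ⟨fun h => absurd rfl h, fun h => absurd h (H.loopless.irrefl _)⟩

lemma q1_char {W : Type*} {H : SimpleGraph W} {S : Set W}
    (φ : H.induce S ≃g hypercube 1) :
    ∃ a b : W, H.Adj a b ∧ S = {a, b} := by
  set va : Fin 1 → Bool := fun _ => false with hva
  set vb : Fin 1 → Bool := fun _ => true with hvb
  have hadj : (hypercube 1).Adj va vb := (q1_adj_iff _ _).mpr (by
    intro h
    exact Bool.false_ne_true (congrFun h 0))
  refine ⟨↑(φ.symm va), ↑(φ.symm vb), φ.symm.map_rel_iff.mpr hadj, ?_⟩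
  ext y
  simp only [Set.mem_insert_iff, Set.mem_singleton_iff]
  constructor
  · intro hy
    have hor : φ ⟨y, hy⟩ = va ∨ φ ⟨y, hy⟩ = vb := by
      by_cases hb : φ ⟨y, hy⟩ 0
      · right
        funext i
        rw [Subsingleton.elim i 0]
        exact hb
      · left
        funext i
        rw [Subsingleton.elim i 0]
        simpa using hb
    rcases hor with h | h
    · left
      have : (⟨y, hy⟩ : S) = φ.symm va := by rw [← h, φ.symm_apply_apply]
      exact congrArg Subtype.val this
    · right
      have : (⟨y, hy⟩ : S) = φ.symm vb := by rw [← h, φ.symm_apply_apply]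
      exact congrArg Subtype.val this
  · rintro (rfl | rfl)
    · exact (φ.symm va).2
    · exact (φ.symm vb).2

lemma cubeCount_one' [Finite V] :
    cubeCount (withPendants G m f) 1 = cubeCount G 1 + m := by
  classical
  have e : ({s : Set V // Nonempty ((G.induce s) ≃g hypercube 1)} ⊕ Fin m) ≃
      {S : Set (V ⊕ Fin m) // Nonempty (((withPendants G m f).induce S) ≃g hypercube 1)} := by
    refine Equiv.ofBijective (Sum.elim
      (fun s : {s : Set V // Nonempty ((G.induce s) ≃g hypercube 1)} =>
        ⟨Sum.inl '' s.1, s.2.map fun ψ => (induceInlIso G f s.1).symm.trans ψ⟩)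
      (fun j : Fin m => ⟨{Sum.inl (f j), Sum.inr j},
          q1_iso (show (withPendants G m f).Adj (Sum.inl (f j)) (Sum.inr j) from rfl)⟩))
      ⟨?_, ?_⟩
    · rintro (⟨s, hs⟩ | j) (⟨s', hs'⟩ | j') h <;>
        simp only [Sum.elim_inl, Sum.elim_inr] at h
      · have hset : Sum.inl '' s = Sum.inl '' s' := congrArg Subtype.val h
        exact congrArg Sum.inl (Subtype.ext (Set.image_injective.mpr Sum.inl_injective hset))
      · exfalso
        have hset : Sum.inl '' s = ({Sum.inl (f j'), Sum.inr j'} : Set (V ⊕ Fin m)) :=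
          congrArg Subtype.val h
        have hmem : (Sum.inr j' : V ⊕ Fin m) ∈ Sum.inl '' s := by
          rw [hset]
          exact Or.inr rfl
        obtain ⟨u, -, hu⟩ := hmem
        exact Sum.inl_ne_inr hu
      · exfalso
        have hset : ({Sum.inl (f j), Sum.inr j} : Set (V ⊕ Fin m)) = Sum.inl '' s' :=
          congrArg Subtype.val h
        have hmem : (Sum.inr j : V ⊕ Fin m) ∈ Sum.inl '' s' := by
          rw [← hset]
          exact Or.inr rfl
        obtain ⟨u, -, hu⟩ := hmem
        exact Sum.inl_ne_inr hu
      · have hset : ({Sum.inl (f j), Sum.inr j} : Set (V ⊕ Fin m)) =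
            ({Sum.inl (f j'), Sum.inr j'} : Set (V ⊕ Fin m)) := congrArg Subtype.val h
        have hmem : (Sum.inr j : V ⊕ Fin m) ∈
            ({Sum.inl (f j'), Sum.inr j'} : Set (V ⊕ Fin m)) := by
          rw [← hset]
          exact Or.inr rfl
        rcases hmem with h' | h'
        · exact (Sum.inr_ne_inl h').elim
        · exact congrArg Sum.inr (Sum.inr_injective h')
    · rintro ⟨S, ⟨φ⟩⟩
      obtain ⟨x, y, hxy, rfl⟩ := q1_char φ
      obtain u | j := x <;> obtain v | j' := y
      · refine ⟨Sum.inl ⟨{u, v}, q1_iso (show G.Adj u v from hxy)⟩, Subtype.ext ?_⟩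
        simp [Set.image_insert_eq]
      · have huv : u = f j' := hxy
        subst huv
        exact ⟨Sum.inr j', rfl⟩
      · have huv : f j = v := hxy
        subst huv
        refine ⟨Sum.inr j, Subtype.ext ?_⟩
        exact (Set.pair_comm _ _)
      · exact hxy.elim
  have hcard := Nat.card_congr e
  rw [Nat.card_sum] at hcard
  have hfin : Nat.card (Fin m) = m := by simp
  unfold cubeCount
  omega

lemma cubeCount_zero' [Finite V] :
    cubeCount (withPendants G m f) 0 = cubeCount G 0 + m := by
  rw [cubeCount_zero, cubeCount_zero, Nat.card_sum]
  simp

lemma cubeCount_vanish {W : Type*} [Finite W] (H : SimpleGraph W) {i : ℕ}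
    (hi : Nat.card W < 2 ^ i) : cubeCount H i = 0 := by
  have : IsEmpty {s : Set W // Nonempty ((H.induce s) ≃g hypercube i)} := by
    constructor
    rintro ⟨s, ⟨φ⟩⟩
    have h1 : Nat.card s = 2 ^ i := by
      rw [Nat.card_congr φ.toEquiv]
      simp [Nat.card_eq_fintype_card]
    have h2 : Nat.card s ≤ Nat.card W :=
      Nat.card_le_card_of_injective _ Subtype.val_injective
    omega
  unfold cubeCount
  exact Nat.card_of_isEmpty

lemma cubePoly_coeff {W : Type*} [Finite W] (H : SimpleGraph W) (n : ℕ) :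
    (cubePoly H).coeff n = cubeCount H n := by
  unfold cubePoly
  rw [Polynomial.finset_sum_coeff]
  simp only [Polynomial.coeff_C_mul, Polynomial.coeff_X_pow, mul_ite, mul_one, mul_zero]
  rw [Finset.sum_ite_eq (Finset.range (Nat.card W + 1)) n (fun i => cubeCount H i)]
  split
  · rfl
  · next hmem =>
    rw [Finset.mem_range, not_lt] at hmem
    have h2 : n < 2 ^ n := Nat.lt_two_pow_self
    exact (cubeCount_vanish H (by omega)).symm

end PendantAux

/-- Let `G` be a finite median graph with `α₃(G) > α₂(G)` and let `G'` be
obtained from `G` by attaching `m ≥ α₂(G) − α₁(G) + 1` pendant vertices. Then `G'` is a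
median graph whose cube polynomial `C(G',x) = C(G,x) + m·(x+1)` is not unimodal. -/
theorem cubePoly_withPendants_not_unimodal {V : Type*} [Finite V] (G : SimpleGraph V)
    (hmed : IsMedianGraph G) (h32 : cubeCount G 2 < cubeCount G 3)
    (m : ℕ) (f : Fin m → V) (hm : cubeCount G 2 - cubeCount G 1 + 1 ≤ m) :
    IsMedianGraph (withPendants G m f) ∧
    cubePoly (withPendants G m f) = cubePoly G + Polynomial.C m * (Polynomial.X + 1) ∧
    ¬ PolyUnimodal (cubePoly (withPendants G m f)) := by
  classical
  have hmed' : IsMedianGraph (withPendants G m f) := PendantAux.median' hmed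
  have hpoly : cubePoly (withPendants G m f) =
      cubePoly G + Polynomial.C m * (Polynomial.X + 1) := by
    apply Polynomial.ext
    intro n
    rw [PendantAux.cubePoly_coeff, Polynomial.coeff_add, PendantAux.cubePoly_coeff]
    have hC : (Polynomial.C m * (Polynomial.X + 1) : Polynomial ℕ).coeff n =
        if n = 0 ∨ n = 1 then m else 0 := by
      rw [mul_add, mul_one, Polynomial.coeff_add, Polynomial.coeff_C_mul, Polynomial.coeff_X,
        Polynomial.coeff_C]
      rcases n with _ | _ | n <;> simp
    rw [hC]
    match n with
    | 0 => rw [PendantAux.cubeCount_zero']; simp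
    | 1 => rw [PendantAux.cubeCount_one']; simp
    | (k + 2) => rw [PendantAux.cubeCount_high (by omega)]; simp
  refine ⟨hmed', hpoly, ?_⟩
  rintro ⟨mo, hup, hdown⟩
  have hc1 : (cubePoly (withPendants G m f)).coeff 1 = cubeCount G 1 + m := by
    rw [PendantAux.cubePoly_coeff, PendantAux.cubeCount_one']
  have hc2 : (cubePoly (withPendants G m f)).coeff 2 = cubeCount G 2 := by
    rw [PendantAux.cubePoly_coeff, PendantAux.cubeCount_high le_rfl]
  have hc3 : (cubePoly (withPendants G m f)).coeff 3 = cubeCount G 3 := by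
    rw [PendantAux.cubePoly_coeff, PendantAux.cubeCount_high (by omega)]
  rcases le_or_gt mo 1 with h | h
  · have h3 : (cubePoly (withPendants G m f)).coeff 3 ≤
        (cubePoly (withPendants G m f)).coeff 2 := hdown 2 (by omega)
    omega
  · have h1 : (cubePoly (withPendants G m f)).coeff 1 ≤
        (cubePoly (withPendants G m f)).coeff 2 := hup 1 h
    omega
end

section
/- Let G be a finite connected bipartite graph and H an induced connected subgraph of G. Then H is a convex subgraph of G if and only if no edge of ∂H = {uv ∈ E(G) : u ∈ V(H), v ∉ V(H)} is in relation Θ to an edge of H. -/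
open SimpleGraph Polynomial

section AuxConvexity
variable {V : Type*} {G : SimpleGraph V}

private lemma walk_parity' (c : G.Coloring (Fin 2)) {x y : V} (p : G.Walk x y) :
    (c x = c y) ↔ Even p.length := by
  induction p with
  | nil => simp
  | @cons u w v h q ih =>
    have hne : c u ≠ c w := c.valid h
    simp only [Walk.length_cons, Nat.even_add_one, ← ih]
    have hu := (c u).isLt; have hw := (c w).isLt; have hy := (c v).isLt
    constructor
    · intro h1 h2; exact hne (h1.trans h2.symm)
    · intro h1
      have e1 : (c u).val ≠ (c w).val := fun hh => hne (Fin.ext hh)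
      have e2 : (c w).val ≠ (c v).val := fun hh => h1 (Fin.ext hh)
      exact Fin.ext (by omega)

private lemma adj_dist' (hconn : G.Connected) (hbip : G.Colorable 2) {a b : V}
    (hab : G.Adj a b) (w : V) :
    G.dist b w = G.dist a w + 1 ∨ G.dist a w = G.dist b w + 1 := by
  obtain ⟨c⟩ := hbip
  obtain ⟨p, hp⟩ := (hconn a w).exists_walk_length_eq_dist
  obtain ⟨q, hq⟩ := (hconn b w).exists_walk_length_eq_dist
  have hne : c a ≠ c b := c.valid hab
  have h1 : (c a = c w) ↔ Even (G.dist a w) := hp ▸ walk_parity' c p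
  have h2 : (c b = c w) ↔ Even (G.dist b w) := hq ▸ walk_parity' c q
  have hd : G.dist a w ≠ G.dist b w := by
    intro h
    rcases Nat.even_or_odd (G.dist a w) with he | ho
    · exact hne ((h1.mpr he).trans (h2.mpr (h ▸ he)).symm)
    · have ha' : c a ≠ c w := fun hh => (Nat.not_even_iff_odd.mpr ho) (h1.mp hh)
      have hb' : c b ≠ c w := fun hh => (Nat.not_even_iff_odd.mpr (h ▸ ho)) (h2.mp hh)
      have hu := (c a).isLt; have hw := (c w).isLt; have hv := (c b).isLt
      have e1 : (c a).val ≠ (c b).val := fun hh => hne (Fin.ext hh)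
      have e2 : (c a).val ≠ (c w).val := fun hh => ha' (Fin.ext hh)
      have e3 : (c b).val ≠ (c w).val := fun hh => hb' (Fin.ext hh)
      omega
  have t1 : G.dist a w ≤ G.dist b w + 1 := by
    calc G.dist a w ≤ G.dist a b + G.dist b w := hconn.dist_triangle
    _ = 1 + G.dist b w := by rw [dist_eq_one_iff_adj.mpr hab]
    _ = G.dist b w + 1 := by omega
  have t2 : G.dist b w ≤ G.dist a w + 1 := by
    calc G.dist b w ≤ G.dist b a + G.dist a w := hconn.dist_triangle
    _ = 1 + G.dist a w := by rw [dist_eq_one_iff_adj.mpr hab.symm]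
    _ = G.dist a w + 1 := by omega
  omega

/-- If `S` is convex and `ab` is a boundary edge, then no vertex of `S` is "behind" `b`. -/
private lemma no_shortcut' (hconn : G.Connected) {S : Set V} (hconv : ConvexSet G S)
    {a b w : V} (hab : G.Adj a b) (ha : a ∈ S) (hb : b ∉ S) (hw : w ∈ S) :
    G.dist a w ≠ G.dist b w + 1 := by
  intro h
  obtain ⟨q, hq⟩ := (hconn b w).exists_walk_length_eq_dist
  have hp : (Walk.cons hab q).length = G.dist a w := by
    simp [Walk.length_cons, hq, h]
  exact hb (hconv a ha w hw _ hp b (by simp [Walk.support_cons]))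

end AuxConvexity

/-- (Convexity lemma) Let `G` be a finite connected bipartite graph and
`H = G[S]` an induced connected subgraph. Then `H` is convex iff no edge of
`∂H = {uv ∈ E(G) : u ∈ S, v ∉ S}` is in relation `Θ` to an edge of `H`. -/
theorem convexity_lemma {V : Type*} [Finite V] (G : SimpleGraph V)
    (hconn : G.Connected) (hbip : G.Colorable 2)
    (S : Set V) (hSconn : (G.induce S).Connected) :
    ConvexSet G S ↔ ∀ a b c d : V, G.Adj a b → a ∈ S → b ∉ S →
      G.Adj c d → c ∈ S → d ∈ S → ¬ DWRel G s(a, b) s(c, d) := by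
  constructor
  · -- convex → no boundary edge Θ-related to an inside edge
    intro hconv a b c d hab haS hbS hcd hcS hdS hdw
    have hbc : G.dist b c = G.dist a c + 1 := by
      rcases adj_dist' hconn hbip hab c with h | h
      · exact h
      · exact absurd h (no_shortcut' hconn hconv hab haS hbS hcS)
    have hbd : G.dist b d = G.dist a d + 1 := by
      rcases adj_dist' hconn hbip hab d with h | h
      · exact h
      · exact absurd h (no_shortcut' hconn hconv hab haS hbS hdS)
    obtain ⟨u, v, x, y, h1, h2, h3⟩ := hdw
    rw [Sym2.eq_iff] at h1 h2
    rcases h1 with ⟨rfl, rfl⟩ | ⟨rfl, rfl⟩ <;> rcases h2 with ⟨rfl, rfl⟩ | ⟨rfl, rfl⟩ <;>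
      omega
  · -- no Θ-relation → convex
    intro hrhs
    -- Key claim: for a boundary edge ab, every w ∈ S satisfies d(b,w) = d(a,w) + 1.
    have claim : ∀ a b : V, G.Adj a b → a ∈ S → b ∉ S →
        ∀ w ∈ S, G.dist b w = G.dist a w + 1 := by
      intro a b hab haS hbS w hwS
      have key : ∀ {x y : S} (_ : (G.induce S).Walk x y),
          G.dist b x.1 = G.dist a x.1 + 1 → G.dist b y.1 = G.dist a y.1 + 1 := by
        intro x y p
        induction p with
        | nil => exact id
        | @cons x z y h q ih =>
          intro hx
          refine ih ?_
          have hxz : G.Adj x.1 z.1 := h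
          have heq : G.dist a x.1 + G.dist b z.1 = G.dist a z.1 + G.dist b x.1 := by
            by_contra hne
            exact hrhs a b x.1 z.1 hab haS hbS hxz x.2 z.2 ⟨a, b, x.1, z.1, rfl, rfl, hne⟩
          omega
      obtain ⟨p⟩ := hSconn.preconnected ⟨a, haS⟩ ⟨w, hwS⟩
      refine key p ?_
      simp only [SimpleGraph.dist_self]
      exact dist_eq_one_iff_adj.mpr hab.symm
    -- Now prove convexity by induction along shortest walks.
    have conv : ∀ {u v : V} (p : G.Walk u v), p.length = G.dist u v → u ∈ S → v ∈ S →
        ∀ y ∈ p.support, y ∈ S := by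
      intro u v p
      induction p with
      | nil =>
        intro _ hu _ y hy
        simp only [Walk.support_nil, List.mem_singleton] at hy
        exact hy ▸ hu
      | @cons u z v h q ih =>
        intro hlen hu hv y hy
        rw [Walk.length_cons] at hlen
        have l1 : G.dist z v ≤ q.length := dist_le q
        have l2 : G.dist u v ≤ G.dist z v + 1 := by
          calc G.dist u v ≤ G.dist u z + G.dist z v := hconn.dist_triangle
          _ = 1 + G.dist z v := by rw [dist_eq_one_iff_adj.mpr h]
          _ = G.dist z v + 1 := by omega
        have hqlen : q.length = G.dist z v := by omega
        have hduv : G.dist u v = G.dist z v + 1 := by omega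
        have hz : z ∈ S := by
          by_contra hzS
          have := claim u z h hu hzS v hv
          omega
        rw [Walk.support_cons, List.mem_cons] at hy
        rcases hy with rfl | hy
        · exact hu
        · exact ih hqlen hz hv y hy
    intro u hu v hv p hp y hy
    exact conv p hp hu hv y hy
end
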